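/- arXiv:2006.11226 — 3 statements merged into one kernel-verified Lean document; each statement's English description precedes it below -/
import Mathlib

section
/- There exist a loss function ℓ : ℝ → ℝ that is convex, differentiable, strictly decreasing with lim_{z→∞} ℓ(z) = 0, and 2-smooth (ℓ' is 2-Lipschitz), together with a linearly separable training set {(x_i, y_i)}_{i=1}^n, such that the regularization-path direction w̄(B)/B does not converge as B → ∞. -/
open Filter RealInnerProductSpace

namespace Stmt13
open MeasureTheory Set

noncomputable def M (k : ℕ) : ℝ := 5 ^ (4*k+2)
noncomputable def C (k : ℕ) : ℝ := 5 ^ (6*k+6)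
noncomputable def h (k : ℕ) (z : ℝ) : ℝ := C k / (max z (M k))^3
noncomputable def a (z : ℝ) : ℝ := ⨆ k, h k z

lemma M_pos (k : ℕ) : 0 < M k := by unfold M; positivity
lemma C_pos (k : ℕ) : 0 < C k := by unfold C; positivity
lemma M_ge (k : ℕ) : (25:ℝ) ≤ M k := by
  have : (5:ℝ)^2 ≤ 5 ^ (4*k+2) := pow_le_pow_right₀ (by norm_num) (by omega)
  norm_num at this
  simpa [M] using this

lemma max_pos {z : ℝ} (k : ℕ) : 0 < max z (M k) := lt_max_of_lt_right (M_pos k)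

lemma h_pos (k : ℕ) (z : ℝ) : 0 < h k z :=
  div_pos (C_pos k) (pow_pos (max_pos k) 3)

lemma h_antitone (k : ℕ) : Antitone (h k) := by
  intro z z' hzz
  exact div_le_div_of_nonneg_left (C_pos k).le (pow_pos (max_pos k) 3)
    (pow_le_pow_left₀ (max_pos k).le (max_le_max hzz le_rfl) 3)

lemma h_flat (k : ℕ) {z : ℝ} (hz : z ≤ M k) : h k z = C k / (M k)^3 := by
  unfold h; rw [max_eq_right hz]

lemma h_cubic (k : ℕ) {z : ℝ} (hz : M k ≤ z) : h k z = C k / z^3 := by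
  unfold h; rw [max_eq_left hz]

lemma flatval_eq (k : ℕ) : C k / (M k)^3 = (5:ℝ)^(6*k+6) / 5^(12*k+6) := by
  unfold C M
  rw [← pow_mul]
  ring_nf

lemma h_le (k : ℕ) (z : ℝ) : h k z ≤ C k / (M k)^3 := by
  unfold h
  exact div_le_div_of_nonneg_left (C_pos k).le (pow_pos (M_pos k) 3)
    (pow_le_pow_left₀ (M_pos k).le (le_max_right _ _) 3)

lemma flatval_le_one (k : ℕ) : C k / (M k)^3 ≤ 1 := by
  rw [flatval_eq]
  rw [div_le_one (by positivity)]
  exact pow_le_pow_right₀ (by norm_num) (by omega)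

lemma h_le_one (k : ℕ) (z : ℝ) : h k z ≤ 1 := (h_le k z).trans (flatval_le_one k)

lemma bdd (z : ℝ) : BddAbove (Set.range fun k => h k z) := by
  refine ⟨1, ?_⟩
  rintro _ ⟨k, rfl⟩
  exact h_le_one k z

lemma h_le_a (k : ℕ) (z : ℝ) : h k z ≤ a z := le_ciSup (bdd z) k

lemma a_le (z : ℝ) {c : ℝ} (hc : ∀ k, h k z ≤ c) : a z ≤ c := ciSup_le hc

lemma a_pos (z : ℝ) : 0 < a z := lt_of_lt_of_le (h_pos 0 z) (h_le_a 0 z)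

lemma a_le_one (z : ℝ) : a z ≤ 1 := a_le z fun k => h_le_one k z

lemma a_antitone : Antitone a := by
  intro z z' hzz
  exact a_le z' fun k => (h_antitone k hzz).trans (h_le_a k z)

lemma h_lip (k : ℕ) {z z' : ℝ} (hzz : z ≤ z') : h k z - h k z' ≤ z' - z := by
  set m := max z (M k) with hm
  set m' := max z' (M k) with hm'
  have hMm : M k ≤ m := le_max_right _ _
  have hmm' : m ≤ m' := max_le_max hzz le_rfl
  have hm0 : 0 < m := (M_pos k).trans_le hMm
  have hm'0 : 0 < m' := hm0.trans_le hmm'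
  have hdiff : m' - m ≤ z' - z := by
    rcases le_or_gt z' (M k) with hz'M | hz'M
    · have e1 : m' ≤ m := by rw [hm', max_eq_right hz'M]; exact le_max_right _ _
      linarith
    · have e1 : m' = z' := by rw [hm']; exact max_eq_left hz'M.le
      have e2 : z ≤ m := le_max_left _ _
      rw [e1]; linarith
  have key : C k * 3 ≤ M k ^ 4 := by
    have h5 : (3:ℝ) * 5^(6*k+6) ≤ 5^(16*k+8) := by
      calc (3:ℝ) * 5^(6*k+6) ≤ 5 * 5^(6*k+6) := by
            have hp : (0:ℝ) < 5^(6*k+6) := by positivity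
            nlinarith
        _ = 5^(6*k+7) := by rw [pow_succ]; ring
        _ ≤ 5^(16*k+8) := pow_le_pow_right₀ (by norm_num) (by omega)
    calc C k * 3 = 3 * 5^(6*k+6) := by unfold C; ring
      _ ≤ 5^(16*k+8) := h5
      _ = M k ^ 4 := by unfold M; rw [← pow_mul]; ring_nf
  have hMm4 : M k ^ 4 ≤ m^3 * m' := by
    calc M k ^ 4 = M k ^3 * M k := by ring
      _ ≤ m^3 * m' := by
        apply mul_le_mul (pow_le_pow_left₀ (M_pos k).le hMm 3) (hMm.trans hmm') (M_pos k).le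
        positivity
  have expand : h k z - h k z' = C k * (m'^3 - m^3) / (m^3 * m'^3) := by
    unfold h
    rw [← hm, ← hm', div_sub_div _ _ (by positivity) (by positivity)]
    ring_nf
  rw [expand, div_le_iff₀ (by positivity)]
  have A1 : (0:ℝ) ≤ m' - m := by linarith
  have B1 : m'*m ≤ m'^2 := by nlinarith
  have B2 : m^2 ≤ m'^2 := by nlinarith
  have A2 : C k * (m'^2 + m'*m + m^2) ≤ M k^4 * m'^2 := by
    nlinarith [mul_le_mul_of_nonneg_left (by nlinarith : m'^2 + m'*m + m^2 ≤ 3*m'^2) (C_pos k).le,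
      mul_le_mul_of_nonneg_right key (sq_nonneg m')]
  have A3 : M k^4 * m'^2 ≤ m^3*m'^3 := by
    nlinarith [mul_le_mul_of_nonneg_right hMm4 (sq_nonneg m')]
  calc C k * (m'^3 - m^3) = (m' - m) * (C k * (m'^2 + m'*m + m^2)) := by ring
    _ ≤ (m' - m) * (m^3*m'^3) := mul_le_mul_of_nonneg_left (A2.trans A3) A1
    _ ≤ (z' - z) * (m^3*m'^3) := mul_le_mul_of_nonneg_right hdiff (by positivity)

lemma a_lip {z z' : ℝ} : |a z - a z'| ≤ |z - z'| := by
  wlog hzz : z ≤ z' generalizing z z'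
  · rw [abs_sub_comm, abs_sub_comm z z']; exact this (le_of_not_ge hzz)
  have h1 : a z' ≤ a z := a_antitone hzz
  have h2 : a z ≤ a z' + (z' - z) := by
    apply a_le
    intro k
    have e1 := h_lip k hzz
    have e2 := h_le_a k z'
    linarith
  rw [abs_of_nonneg (by linarith), abs_of_nonpos (by linarith : z - z' ≤ 0)]
  linarith

lemma a_continuous : Continuous a := by
  have hl : LipschitzWith 1 a := by
    apply LipschitzWith.of_dist_le_mul
    intro z z'
    simpa [Real.dist_eq] using a_lip (z := z) (z' := z')
  exact hl.continuous


/-! ### Block values of `a` -/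

lemma pow5_le {i j : ℕ} (hij : i ≤ j) : (5:ℝ)^i ≤ 5^j := pow_le_pow_right₀ (by norm_num) hij

lemma a_flat (k : ℕ) {z : ℝ} (h1 : (5:ℝ)^(4*k) ≤ z) (h2 : z ≤ M k) :
    a z = C k / (M k)^3 := by
  have hz0 : 0 < z := lt_of_lt_of_le (by positivity) h1
  refine le_antisymm (a_le z fun j => ?_) (by rw [← h_flat k h2]; exact h_le_a k z)
  rcases lt_trichotomy j k with hjk | rfl | hjk
  · have hMjz : M j ≤ z := by
      refine le_trans ?_ h1
      unfold M
      exact pow5_le (by omega)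
    rw [h_cubic j hMjz]
    rw [div_le_div_iff₀ (pow_pos hz0 3) (pow_pos (M_pos k) 3)]
    calc C j * M k ^3 = (5:ℝ)^(6*j+6) * 5^(12*k+6) := by
          unfold C M; rw [← pow_mul]; norm_num; congr 1; ring
      _ = (5:ℝ)^(6*j+6+(12*k+6)) := by rw [← pow_add]
      _ ≤ (5:ℝ)^(6*k+6+12*k) := pow5_le (by omega)
      _ = C k * ((5:ℝ)^(4*k))^3 := by
          unfold C; rw [← pow_mul, ← pow_add]; congr 1; ring
      _ ≤ C k * z^3 := mul_le_mul_of_nonneg_left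
          (pow_le_pow_left₀ (by positivity) h1 3) (C_pos k).le
  · exact le_of_eq (h_flat _ h2)
  · refine (h_le j z).trans ?_
    rw [flatval_eq, flatval_eq]
    rw [div_le_div_iff₀ (by positivity) (by positivity)]
    rw [← pow_add, ← pow_add]
    exact pow5_le (by omega)

lemma a_cubic (k : ℕ) {z : ℝ} (h1 : M k ≤ z) (h2 : z ≤ (5:ℝ)^(4*k+4)) :
    a z = C k / z^3 := by
  have hz0 : 0 < z := lt_of_lt_of_le (M_pos k) h1
  refine le_antisymm (a_le z fun j => ?_) (by rw [← h_cubic k h1]; exact h_le_a k z)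
  rcases lt_trichotomy j k with hjk | rfl | hjk
  · have hMjz : M j ≤ z := le_trans (by unfold M; exact pow5_le (by omega)) h1
    rw [h_cubic j hMjz]
    exact (div_le_div_iff_of_pos_right (pow_pos hz0 3)).mpr (by unfold C; exact pow5_le (by omega))
  · exact le_of_eq (h_cubic _ h1)
  · refine (h_le j z).trans ?_
    rw [flatval_eq]
    rw [div_le_div_iff₀ (by positivity) (pow_pos hz0 3)]
    calc (5:ℝ)^(6*j+6) * z^3 ≤ (5:ℝ)^(6*j+6) * ((5:ℝ)^(4*k+4))^3 :=
          mul_le_mul_of_nonneg_left (pow_le_pow_left₀ hz0.le h2 3) (by positivity)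
      _ = (5:ℝ)^(6*j+6+(4*k+4)*3) := by rw [← pow_mul, ← pow_add]
      _ ≤ (5:ℝ)^(6*k+6+(12*j+6)) := pow5_le (by omega)
      _ = C k * (5:ℝ)^(12*j+6) := by unfold C; rw [← pow_add]

/-! ### envelope bound and integrability -/

lemma M_rpow (j : ℕ) : (M j) ^ ((3:ℝ)/2) = (5:ℝ)^(6*j+3) := by
  unfold M
  rw [← Real.rpow_natCast (5:ℝ) (4*j+2), ← Real.rpow_mul (by norm_num)]
  rw [← Real.rpow_natCast (5:ℝ) (6*j+3)]
  congr 1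
  push_cast; ring

lemma a_bound {z : ℝ} (hz : 1 ≤ z) : a z ≤ 125 * z ^ (-(3:ℝ)/2) := by
  have hz0 : (0:ℝ) < z := by linarith
  have hrp : (0:ℝ) < z ^ ((3:ℝ)/2) := Real.rpow_pos_of_pos hz0 _
  have hneg : z ^ (-(3:ℝ)/2) = (z ^ ((3:ℝ)/2))⁻¹ := by
    rw [← Real.rpow_neg hz0.le]; norm_num
  apply a_le
  intro j
  have hC : C j = 125 * (5:ℝ)^(6*j+3) := by
    unfold C; rw [show (125:ℝ) = 5^3 by norm_num, ← pow_add]; congr 1; ring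
  rcases le_or_gt z (M j) with hle | hlt
  · rw [h_flat j hle, hneg, div_le_iff₀ (pow_pos (M_pos j) 3)]
    have h1 : z ^ ((3:ℝ)/2) ≤ (5:ℝ)^(6*j+3) := by
      rw [← M_rpow j]; exact Real.rpow_le_rpow hz0.le hle (by norm_num)
    have key : C j * (5:ℝ)^(6*j+3) = 125 * (M j)^3 := by
      unfold C M
      rw [← pow_mul, ← pow_add, show (125:ℝ) = 5^3 by norm_num, ← pow_add]
      congr 1; ring
    calc C j = C j * z ^ ((3:ℝ)/2) * (z ^ ((3:ℝ)/2))⁻¹ := by field_simp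
      _ ≤ C j * (5:ℝ)^(6*j+3) * (z ^ ((3:ℝ)/2))⁻¹ := by
          apply mul_le_mul_of_nonneg_right _ (inv_nonneg.2 hrp.le)
          exact mul_le_mul_of_nonneg_left h1 (C_pos j).le
      _ = 125 * (M j)^3 * (z ^ ((3:ℝ)/2))⁻¹ := by rw [key]
      _ = 125 * (z ^ ((3:ℝ)/2))⁻¹ * (M j)^3 := by ring
  · rw [h_cubic j hlt.le, hneg, div_le_iff₀ (pow_pos hz0 3)]
    have h1 : (5:ℝ)^(6*j+3) ≤ z ^ ((3:ℝ)/2) := by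
      rw [← M_rpow j]; exact Real.rpow_le_rpow (M_pos j).le hlt.le (by norm_num)
    have h2 : (z:ℝ)^(3:ℕ) = z ^ ((3:ℝ)/2) * z ^ ((3:ℝ)/2) := by
      rw [← Real.rpow_add hz0, ← Real.rpow_natCast z 3]; norm_num
    calc C j = 125 * (5:ℝ)^(6*j+3) := hC
      _ ≤ 125 * z ^ ((3:ℝ)/2) := by nlinarith
      _ = 125 * (z ^ ((3:ℝ)/2))⁻¹ * z^(3:ℕ) := by rw [h2]; field_simp

lemma a_integrableOn (c : ℝ) : IntegrableOn a (Ioi c) := by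
  have h1 : IntegrableOn a (Ioi 1) := by
    have hb : IntegrableOn (fun t : ℝ => 125 * t ^ (-(3:ℝ)/2)) (Ioi 1) := by
      have := (integrableOn_Ioi_rpow_of_lt (show (-(3:ℝ)/2) < -1 by norm_num)
        (show (0:ℝ) < 1 by norm_num))
      exact this.const_mul 125
    apply hb.integrable.mono' (a_continuous.aestronglyMeasurable.restrict)
    rw [ae_restrict_iff' measurableSet_Ioi]
    filter_upwards with t ht
    rw [Real.norm_eq_abs, abs_of_pos (a_pos t)]
    exact a_bound ht.le
  rcases le_or_gt 1 c with hc | hc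
  · exact h1.mono_set (Ioi_subset_Ioi hc)
  · rw [← Set.Ioc_union_Ioi_eq_Ioi hc.le]
    exact (a_continuous.integrableOn_Ioc).union h1

/-! ### the loss function L -/

noncomputable def L (z : ℝ) : ℝ := ∫ t in Ioi z, a t

lemma L_split {z z' : ℝ} (hzz : z ≤ z') : L z = (∫ t in Ioc z z', a t) + L z' := by
  unfold L
  rw [← Set.Ioc_union_Ioi_eq_Ioi hzz]
  rw [setIntegral_union (Set.Ioc_disjoint_Ioi le_rfl) measurableSet_Ioi
    (a_continuous.integrableOn_Ioc) ((a_integrableOn z').mono_set (by rfl))]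

lemma L_base (z : ℝ) : L z = L 0 - ∫ t in (0:ℝ)..z, a t := by
  rcases le_or_gt 0 z with hz | hz
  · rw [intervalIntegral.integral_of_le hz, L_split hz]
    ring
  · rw [intervalIntegral.integral_symm, intervalIntegral.integral_of_le hz.le,
      L_split hz.le]
    ring

lemma L_hasDerivAt (z : ℝ) : HasDerivAt L (-(a z)) z := by
  have hD : HasDerivAt (fun x => L 0 - ∫ t in (0:ℝ)..x, a t) (0 - a z) z := by
    apply (hasDerivAt_const _ _).sub
    exact intervalIntegral.integral_hasDerivAt_right
      (a_continuous.intervalIntegrable _ _)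
      (a_continuous.stronglyMeasurableAtFilter _ _)
      a_continuous.continuousAt
  have : HasDerivAt L (0 - a z) z := by
    apply hD.congr_of_eventuallyEq
    filter_upwards with x
    exact L_base x
  simpa using this

lemma L_deriv (z : ℝ) : deriv L z = -(a z) := (L_hasDerivAt z).deriv

lemma L_diff : Differentiable ℝ L := fun z => (L_hasDerivAt z).differentiableAt

lemma L_convex : ConvexOn ℝ Set.univ L := by
  apply Monotone.convexOn_univ_of_deriv L_diff
  intro u v huv
  rw [L_deriv, L_deriv, neg_le_neg_iff]
  exact a_antitone huv

lemma L_diff_lip (z z' : ℝ) : |deriv L z - deriv L z'| ≤ 2 * |z - z'| := by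
  rw [L_deriv, L_deriv]
  have := a_lip (z := z') (z' := z)
  calc |-(a z) - -(a z')| = |a z' - a z| := by
        rw [show -(a z) - -(a z') = -(a z - a z') by ring, abs_neg, abs_sub_comm]
    _ ≤ |z' - z| := a_lip
    _ = |z - z'| := abs_sub_comm _ _
    _ ≤ 2 * |z - z'| := by nlinarith [abs_nonneg (z - z')]

lemma integral_Ioc_bounds {y x : ℝ} (hyx : y ≤ x) :
    (x - y) * a x ≤ (∫ t in Ioc y x, a t) ∧ (∫ t in Ioc y x, a t) ≤ x - y := by
  have hvol : (volume (Ioc y x)).toReal = x - y := by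
    rw [Real.volume_Ioc, ENNReal.toReal_ofReal (by linarith)]
  constructor
  · have : (∫ t in Ioc y x, a x) ≤ ∫ t in Ioc y x, a t := by
      apply setIntegral_mono_on (integrableOn_const (by
        rw [Real.volume_Ioc]; exact ENNReal.ofReal_lt_top.ne))
        (a_continuous.integrableOn_Ioc) measurableSet_Ioc
      intro t ht
      exact a_antitone ht.2
    rwa [setIntegral_const, measureReal_def, hvol, smul_eq_mul] at this
  · have : (∫ t in Ioc y x, a t) ≤ ∫ t in Ioc y x, (1:ℝ) := by
      apply setIntegral_mono_on (a_continuous.integrableOn_Ioc)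
        (integrableOn_const (by
          rw [Real.volume_Ioc]; exact ENNReal.ofReal_lt_top.ne)) measurableSet_Ioc
      intro t _
      exact a_le_one t
    rwa [setIntegral_const, measureReal_def, hvol, smul_eq_mul, mul_one] at this

lemma L_lip {y x : ℝ} (hyx : y ≤ x) : L y - L x ≤ x - y := by
  rw [L_split hyx]
  have := (integral_Ioc_bounds hyx).2
  linarith

lemma L_drop {y x : ℝ} (hyx : y ≤ x) : (x - y) * a x ≤ L y - L x := by
  rw [L_split hyx]
  have := (integral_Ioc_bounds hyx).1
  linarith

lemma L_strictAnti : StrictAnti L := by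
  intro x y hxy
  have h1 := L_drop hxy.le
  nlinarith [a_pos y]

lemma L_nonneg (z : ℝ) : 0 ≤ L z :=
  setIntegral_nonneg measurableSet_Ioi fun t _ => (a_pos t).le

lemma L_tendsto : Tendsto L atTop (nhds 0) := by
  have h1 : Tendsto (fun z : ℝ => ∫ t in (0:ℝ)..z, a t) atTop (nhds (L 0)) :=
    intervalIntegral_tendsto_integral_Ioi 0 (a_integrableOn 0) tendsto_id
  have h2 : Tendsto (fun z : ℝ => L 0 - ∫ t in (0:ℝ)..z, a t) atTop (nhds (L 0 - L 0)) :=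
    (tendsto_const_nhds).sub h1
  simpa [← L_base] using h2

/-! ### auxiliary real facts -/

lemma sq_eq_pos {x y : ℝ} (hx : 0 ≤ x) (hy : 0 ≤ y) (hxy : x^2 = y^2) : x = y := by
  rw [← Real.sqrt_sq hx, hxy, Real.sqrt_sq hy]

lemma sqrt_lower {B s : ℝ} (hB : 0 < B) (hs0 : 0 ≤ s) (hsB : s ≤ B) :
    B - s^2/B ≤ Real.sqrt (B^2 - s^2) := by
  have h1 : 0 ≤ B - s^2/B := by
    rw [sub_nonneg, div_le_iff₀ hB]; nlinarith
  have key : (B - s^2/B)^2 ≤ B^2 - s^2 := by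
    have e : (B - s^2/B)^2 = B^2 - 2*s^2 + s^4/B^2 := by field_simp; ring
    have h2 : s^4/B^2 ≤ s^2 := by
      rw [div_le_iff₀ (by positivity)]
      nlinarith [mul_le_mul_of_nonneg_left (by nlinarith : s^2 ≤ B^2) (sq_nonneg s)]
    rw [e]; linarith
  exact (Real.le_sqrt h1 (by nlinarith)).mpr key

/-! ### the key variational analysis -/

set_option maxHeartbeats 2000000 in
lemma critical {B w1 w2 : ℝ} (hB : 0 < B)
    (hle : w1^2 + w2^2 ≤ B^2)
    (hmin : ∀ v1 v2 : ℝ, v1^2 + v2^2 ≤ B^2 → L w1 + L (w2/2) ≤ L v1 + L (v2/2)) :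
    0 < w1 ∧ 0 < w2 ∧ w1^2 + w2^2 = B^2 ∧
      2*w2*(a w1) = w1 * a (w2/2) ∧ w2/2 ≤ w1 ∧ w1 ≤ 2*w2 := by
  have hw22 : w2^2 ≤ B^2 := by nlinarith [sq_nonneg w1]
  have hBw2 : (0:ℝ) ≤ B^2 - w2^2 := by linarith
  -- Step 1: w2 ≥ 0 and w1 = sqrt (B² - w2²)
  have step1 : 0 ≤ w2 ∧ w1 = Real.sqrt (B^2 - w2^2) := by
    set w1' := Real.sqrt (B^2 - w2^2) with hw1'
    have hsq : w1'^2 = B^2 - w2^2 := Real.sq_sqrt hBw2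
    have happ := hmin w1' |w2| (by rw [hsq, sq_abs]; linarith)
    have e1 : w1 ≤ w1' := by
      calc w1 ≤ |w1| := le_abs_self w1
        _ = Real.sqrt (w1^2) := (Real.sqrt_sq_eq_abs w1).symm
        _ ≤ w1' := Real.sqrt_le_sqrt (by nlinarith)
    have e2 : w2/2 ≤ |w2|/2 := by
      have := le_abs_self w2; linarith
    have f1 : L w1' ≤ L w1 := L_strictAnti.antitone e1
    have f2 : L (|w2|/2) ≤ L (w2/2) := L_strictAnti.antitone e2
    have g1 : L w1 = L w1' := le_antisymm (by linarith) f1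
    have g2 : L (w2/2) = L (|w2|/2) := le_antisymm (by linarith) f2
    have i1 : w1 = w1' := L_strictAnti.injective g1
    have i2 : w2/2 = |w2|/2 := L_strictAnti.injective g2
    exact ⟨by rw [show w2 = |w2| by linarith]; exact abs_nonneg w2, i1⟩
  obtain ⟨hw20, hw1eq⟩ := step1
  have hnorm : w1^2 + w2^2 = B^2 := by
    rw [hw1eq, Real.sq_sqrt hBw2]; ring
  have hw10 : 0 ≤ w1 := hw1eq ▸ Real.sqrt_nonneg _
  -- ψ-minimality
  have hψ : ∀ s : ℝ, s^2 ≤ B^2 →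
      L w1 + L (w2/2) ≤ L (Real.sqrt (B^2 - s^2)) + L (s/2) := by
    intro s hs
    exact hmin _ s (by rw [Real.sq_sqrt (by linarith)]; linarith)
  obtain ⟨β, hβdef⟩ : ∃ b, b = a B := ⟨_, rfl⟩
  have hβ : 0 < β := hβdef ▸ a_pos B
  have hβ1 : β ≤ 1 := hβdef ▸ a_le_one B
  -- Step 2: w2 > 0
  have hw2pos : 0 < w2 := by
    rcases lt_or_eq_of_le hw20 with h | h
    · exact h
    -- w2 = 0, w1 = B
    exfalso
    have hw2z : w2 = 0 := h.symm
    have hw1B : w1 = B := by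
      rw [hw1eq, hw2z]; simp [Real.sqrt_sq hB.le]
    set s := B*β/4 with hsdef
    have hs0 : 0 < s := by nlinarith [mul_pos hB hβ]
    have hsB : s ≤ B := by nlinarith
    have happ := hψ s (by nlinarith)
    set p := Real.sqrt (B^2 - s^2) with hpdef
    have hpB : p ≤ B := by
      rw [hpdef]
      calc Real.sqrt (B^2 - s^2) ≤ Real.sqrt (B^2) := Real.sqrt_le_sqrt (by nlinarith)
        _ = B := Real.sqrt_sq hB.le
    have hplow : B - s^2/B ≤ p := sqrt_lower hB hs0.le hsB
    have d1 : L p - L B ≤ B - p := L_lip hpB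
    have d2 : (s/2 - 0) * a (s/2) ≤ L 0 - L (s/2) := L_drop (by linarith)
    have d3 : β ≤ a (s/2) := hβdef ▸ a_antitone (by nlinarith)
    -- L B + L 0 ≤ L p + L (s/2)
    rw [hw1B, hw2z] at happ
    norm_num at happ
    have c1 : (s/2) * β ≤ B - p := by
      nlinarith [mul_le_mul_of_nonneg_left d3 (by nlinarith : (0:ℝ) ≤ s/2)]
    have c2 : B - p ≤ s^2/B := by linarith
    rw [hsdef] at c1 c2
    have hfin : (B*β/4/2) * β ≤ (B*β/4)^2/B := le_trans c1 c2
    have hfin2 := (le_div_iff₀ hB).mp hfin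
    nlinarith
  -- Step 2': w2 < B
  have hw2B : w2 < B := by
    rcases lt_or_eq_of_le (show w2 ≤ B by nlinarith) with h | h
    · exact h
    exfalso
    have hw1z : w1 = 0 := by nlinarith
    set r := B*β/4 with hrdef
    have hr0 : 0 < r := by nlinarith [mul_pos hB hβ]
    have hrB : r ≤ B := by nlinarith
    set s := Real.sqrt (B^2 - r^2) with hsdef
    have hs2 : s^2 = B^2 - r^2 := Real.sq_sqrt (by nlinarith)
    have hs0 : 0 ≤ s := Real.sqrt_nonneg _
    have hsB : s ≤ B := by
      rw [hsdef]
      calc Real.sqrt (B^2 - r^2) ≤ Real.sqrt (B^2) := Real.sqrt_le_sqrt (by nlinarith)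
        _ = B := Real.sqrt_sq hB.le
    have happ := hmin r s (by rw [hs2]; linarith)
    rw [hw1z, h] at happ
    -- L 0 + L (w2/2) ≤ L r + L (s/2), w2 = B
    have d1 : L (s/2) - L (B/2) ≤ B/2 - s/2 := L_lip (by linarith)
    have d2 : (r - 0) * a r ≤ L 0 - L r := L_drop (by linarith)
    have d3 : β ≤ a r := hβdef ▸ a_antitone hrB
    have hslow : B - r^2/B ≤ s := sqrt_lower hB hr0.le hrB
    have c1 : r * β ≤ B/2 - s/2 := by
      nlinarith [mul_le_mul_of_nonneg_left d3 hr0.le]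
    have c2 : B/2 - s/2 ≤ r^2/(2*B) := by
      have h1 : B - s ≤ r^2/B := by linarith
      have h2 : r^2/(2*B) = (r^2/B)/2 := by ring
      linarith
    rw [hrdef] at c1 c2
    have hfin : (B*β/4) * β ≤ (B*β/4)^2/(2*B) := le_trans c1 c2
    have hfin2 := (le_div_iff₀ (by positivity : (0:ℝ) < 2*B)).mp hfin
    nlinarith
  have hw1pos : 0 < w1 := by
    rw [hw1eq]
    exact Real.sqrt_pos.mpr (by nlinarith)
  -- Step 3: derivative condition
  have hloc : IsLocalMin (fun s => L (Real.sqrt (B^2 - s^2)) + L (s/2)) w2 := by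
    have hmem : Set.Ioo (-B) B ∈ nhds w2 := Ioo_mem_nhds (by linarith) hw2B
    filter_upwards [hmem] with s hs
    have : s^2 ≤ B^2 := by nlinarith [hs.1, hs.2]
    have h2 := hψ s this
    have : Real.sqrt (B^2 - w2^2) = w1 := hw1eq.symm
    simpa [this] using h2
  have hBw2pos : 0 < B^2 - w2^2 := by nlinarith
  have hin : HasDerivAt (fun s : ℝ => B^2 - s^2) (0 - 2*w2) w2 := by
    apply (hasDerivAt_const _ _).sub
    simpa using hasDerivAt_pow 2 w2
  have hsqd : HasDerivAt (fun s : ℝ => Real.sqrt (B^2 - s^2))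
      ((0 - 2*w2) / (2 * w1)) w2 := by
    have hne : B^2 - w2^2 ≠ 0 := hBw2pos.ne'
    have hder := hin.sqrt hne
    rw [← hw1eq] at hder
    exact hder
  have term1 : HasDerivAt (fun s : ℝ => L (Real.sqrt (B^2 - s^2)))
      (-(a w1) * ((0 - 2*w2) / (2 * w1))) w2 := by
    have houter : HasDerivAt L (-(a w1)) (Real.sqrt (B^2 - w2^2)) := by
      rw [← hw1eq]; exact L_hasDerivAt w1
    exact houter.comp w2 hsqd
  have term2 : HasDerivAt (fun s : ℝ => L (s/2)) (-(a (w2/2)) * (1/2)) w2 := by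
    have hhalf : HasDerivAt (fun s : ℝ => s/2) (1/2) w2 := by
      simpa using (hasDerivAt_id w2).div_const 2
    exact (L_hasDerivAt (w2/2)).comp w2 hhalf
  have hcrit := hloc.hasDerivAt_eq_zero (term1.add term2)
  have heq : 2*w2*(a w1) = w1 * a (w2/2) := by
    have hw1ne : w1 ≠ 0 := hw1pos.ne'
    field_simp [hw1ne] at hcrit
    nlinarith [hcrit]
  -- Step 4: ratio bounds
  have hq0 : 0 < w2/2 := by linarith
  have hqp : w2/2 ≤ w1 := by
    by_contra hcon
    push_neg at hcon
    have ha1 : a (w2/2) ≤ a w1 := a_antitone hcon.le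
    have := a_pos (w2/2)
    nlinarith
  have hp4q : w1 ≤ 2*w2 := by
    have ha1 : a w1 ≤ a (w2/2) := a_antitone hqp
    have := a_pos (w2/2)
    nlinarith [a_pos w1]
  exact ⟨hw1pos, hw2pos, hnorm, heq, hqp, hp4q⟩

/-! ### the two regimes -/

set_option maxHeartbeats 1000000 in
lemma regimeA (k : ℕ) {w1 w2 : ℝ}
    (hle : w1^2 + w2^2 ≤ (M k)^2)
    (hmin : ∀ v1 v2 : ℝ, v1^2 + v2^2 ≤ (M k)^2 →
      L w1 + L (w2/2) ≤ L v1 + L (v2/2)) :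
    w1 = M k * (2/Real.sqrt 5) ∧ w2 = M k * (1/Real.sqrt 5) := by
  obtain ⟨h1, h2, hnorm, heq, hq1, hq2⟩ := critical (M_pos k) hle hmin
  have hB : 0 < M k := M_pos k
  have hw1B : w1 ≤ M k := by nlinarith
  have hqB : w2/2 ≤ M k := by nlinarith
  have hw1lo : M k/5 ≤ w1 := by nlinarith
  have hqlo : M k/5 ≤ w2/2 := by nlinarith
  have e25 : M k = (5:ℝ)^(4*k)*25 := by unfold M; rw [pow_add]; norm_num
  have hfl : (5:ℝ)^(4*k) ≤ M k/5 := by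
    rw [e25]
    have : (0:ℝ) < (5:ℝ)^(4*k) := by positivity
    nlinarith
  have ha1 : a w1 = C k/(M k)^3 := a_flat k (le_trans hfl hw1lo) hw1B
  have ha2 : a (w2/2) = C k/(M k)^3 := a_flat k (le_trans hfl hqlo) hqB
  have hα : 0 < C k/(M k)^3 := div_pos (C_pos k) (pow_pos (M_pos k) 3)
  rw [ha1, ha2] at heq
  have hw12 : 2*w2 = w1 := mul_right_cancel₀ hα.ne' heq
  have h5 : (0:ℝ) < Real.sqrt 5 := Real.sqrt_pos.mpr (by norm_num)
  have hsq5 : (Real.sqrt 5)^2 = 5 := Real.sq_sqrt (by norm_num)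
  have hw2v : w2 = M k * (1/Real.sqrt 5) := by
    apply sq_eq_pos h2.le (by positivity)
    have expand : (M k * (1/Real.sqrt 5))^2 = (M k)^2/5 := by
      rw [mul_pow, div_pow, one_pow, hsq5]; ring
    rw [expand]; nlinarith
  refine ⟨?_, hw2v⟩
  rw [← hw12, hw2v]; ring

set_option maxHeartbeats 1000000 in
lemma regimeB (k : ℕ) {w1 w2 : ℝ}
    (hle : w1^2 + w2^2 ≤ ((5:ℝ)^(4*k+4))^2)
    (hmin : ∀ v1 v2 : ℝ, v1^2 + v2^2 ≤ ((5:ℝ)^(4*k+4))^2 →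
      L w1 + L (w2/2) ≤ L v1 + L (v2/2)) :
    w1 = (5:ℝ)^(4*k+4) * (Real.sqrt 2/Real.sqrt 6) ∧
      w2 = (5:ℝ)^(4*k+4) * (2/Real.sqrt 6) := by
  set B : ℝ := (5:ℝ)^(4*k+4) with hBdef
  have hB : 0 < B := by positivity
  obtain ⟨h1, h2, hnorm, heq, hq1, hq2⟩ := critical hB hle hmin
  have hw1B : w1 ≤ B := by nlinarith
  have hqB : w2/2 ≤ B := by nlinarith
  have hw1lo : B/5 ≤ w1 := by nlinarith
  have hqlo : B/5 ≤ w2/2 := by nlinarith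
  have e25 : B = M k * 25 := by rw [hBdef]; unfold M; rw [pow_add, pow_add]; norm_num; ring
  have hfl : M k ≤ B/5 := by
    have := M_pos k
    nlinarith
  have ha1 : a w1 = C k/w1^3 := a_cubic k (le_trans hfl hw1lo) hw1B
  have ha2 : a (w2/2) = C k/(w2/2)^3 := a_cubic k (le_trans hfl hqlo) hqB
  rw [ha1, ha2] at heq
  -- 2*w2*(C k/w1^3) = w1*(C k/(w2/2)^3)  ⇒  w1^4 = 4*(w2/2)^4
  have hw1ne : w1 ≠ 0 := h1.ne'
  have hqne : w2 ≠ 0 := h2.ne'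
  have heq2 : w1^4 = 4*(w2/2)^4 := by
    field_simp at heq
    have heq3 : C k * w1^4 = C k * (4*(w2/2)^4) := by ring_nf; ring_nf at heq; linarith
    exact mul_left_cancel₀ (C_pos k).ne' heq3
  have hq2eq : w1^2 = 2*(w2/2)^2 := by
    apply sq_eq_pos (sq_nonneg w1) (by positivity)
    calc (w1^2)^2 = w1^4 := by ring
      _ = 4*(w2/2)^4 := heq2
      _ = (2*(w2/2)^2)^2 := by ring
  -- B² = w1² + w2² = 2 q² + 4 q² = 6 q², q = w2/2
  have h6 : (0:ℝ) < Real.sqrt 6 := Real.sqrt_pos.mpr (by norm_num)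
  have hsq6 : (Real.sqrt 6)^2 = 6 := Real.sq_sqrt (by norm_num)
  have h2' : (0:ℝ) < Real.sqrt 2 := Real.sqrt_pos.mpr (by norm_num)
  have hsq2 : (Real.sqrt 2)^2 = 2 := Real.sq_sqrt (by norm_num)
  have hw2v : w2 = B * (2/Real.sqrt 6) := by
    apply sq_eq_pos h2.le (by positivity)
    have expand : (B * (2/Real.sqrt 6))^2 = B^2*4/6 := by
      rw [mul_pow, div_pow, hsq6]; ring
    rw [expand]; nlinarith
  refine ⟨?_, hw2v⟩
  apply sq_eq_pos h1.le (by positivity)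
  have expand : (B * (Real.sqrt 2/Real.sqrt 6))^2 = B^2*2/6 := by
    rw [mul_pow, div_pow, hsq2, hsq6]; ring
  rw [expand]; nlinarith

/-! ### Euclidean space helpers -/

noncomputable def vec (s t : ℝ) : EuclideanSpace ℝ (Fin 2) :=
  (WithLp.equiv 2 (Fin 2 → ℝ)).symm ![s, t]

lemma vec0 (s t : ℝ) : (vec s t) 0 = s := by simp [vec]
lemma vec1 (s t : ℝ) : (vec s t) 1 = t := by simp [vec]

lemma inner2 (v w : EuclideanSpace ℝ (Fin 2)) : ⟪v, w⟫ = v 0 * w 0 + v 1 * w 1 := by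
  simp [PiLp.inner_apply, RCLike.inner_apply, Fin.sum_univ_two]
  ring

lemma norm_le_iff (v : EuclideanSpace ℝ (Fin 2)) {B : ℝ} (hB : 0 ≤ B) :
    ‖v‖ ≤ B ↔ (v 0)^2 + (v 1)^2 ≤ B^2 := by
  rw [EuclideanSpace.norm_eq]
  simp only [Real.norm_eq_abs, sq_abs, Fin.sum_univ_two]
  constructor
  · intro hle
    nlinarith [Real.sq_sqrt (show (0:ℝ) ≤ v 0^2 + v 1^2 by positivity),
      Real.sqrt_nonneg (v 0^2 + v 1^2)]
  · intro h
    rw [show B = Real.sqrt (B^2) from (Real.sqrt_sq hB).symm]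
    exact Real.sqrt_le_sqrt h

lemma tendsto_seq (c : ℕ) : Tendsto (fun k : ℕ => (5:ℝ)^(4*k+c)) atTop atTop := by
  have h1 : Tendsto (fun n : ℕ => (5:ℝ)^n) atTop atTop :=
    tendsto_pow_atTop_atTop_of_one_lt (by norm_num)
  have h2 : Tendsto (fun k : ℕ => 4*k+c) atTop atTop :=
    tendsto_atTop_mono (fun k => by simp only [id_eq]; omega) tendsto_id
  exact h1.comp h2

end Stmt13

open Stmt13 in
set_option maxHeartbeats 1000000 in
/-- There exist a convex, differentiable, strictly decreasing
loss `ℓ` with `ℓ(z) → 0` as `z → ∞` whose derivative is 2-Lipschitz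
(2-smoothness), together with a linearly separable training set, such that the
regularization-path direction `w̄(B)/B` does not converge as `B → ∞`. -/
theorem exists_smooth_loss_regularization_direction_diverges :
    ∃ (ℓ : ℝ → ℝ) (d n : ℕ) (x : Fin n → EuclideanSpace ℝ (Fin d))
      (y : Fin n → ℝ),
      0 < n ∧
      ConvexOn ℝ Set.univ ℓ ∧
      Differentiable ℝ ℓ ∧
      StrictAnti ℓ ∧
      Tendsto ℓ atTop (nhds 0) ∧
      (∀ z z' : ℝ, |deriv ℓ z - deriv ℓ z'| ≤ 2 * |z - z'|) ∧
      (∀ i, ‖x i‖ ≤ 1) ∧ (∀ i, y i = 1 ∨ y i = -1) ∧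
      (∃ (u : EuclideanSpace ℝ (Fin d)) (γ : ℝ), ‖u‖ = 1 ∧ 0 < γ ∧
        ∀ i, γ ≤ y i * ⟪u, x i⟫) ∧
      ∀ wbar : ℝ → EuclideanSpace ℝ (Fin d),
        (∀ B : ℝ, 0 ≤ B → ‖wbar B‖ ≤ B ∧ ∀ v, ‖v‖ ≤ B →
          (1 / (n : ℝ)) * ∑ i, ℓ (y i * ⟪wbar B, x i⟫) ≤
            (1 / (n : ℝ)) * ∑ i, ℓ (y i * ⟪v, x i⟫)) →
        ¬ ∃ u : EuclideanSpace ℝ (Fin d),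
            Tendsto (fun B : ℝ => B⁻¹ • wbar B) atTop (nhds u) := by
  refine ⟨L, 2, 2, ![vec 1 0, vec 0 (1/2)], fun _ => 1,
    by norm_num, L_convex, L_diff, L_strictAnti, L_tendsto, L_diff_lip, ?_, ?_, ?_, ?_⟩
  · intro i
    fin_cases i
    · show ‖vec 1 0‖ ≤ 1
      rw [norm_le_iff _ (by norm_num), vec0, vec1]
      norm_num
    · show ‖vec 0 (1/2)‖ ≤ 1
      rw [norm_le_iff _ (by norm_num), vec0, vec1]
      norm_num
  · intro i; left; rfl
  · refine ⟨vec (3/5) (4/5), 2/5, ?_, by norm_num, ?_⟩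
    · rw [EuclideanSpace.norm_eq]
      simp only [Real.norm_eq_abs, sq_abs, Fin.sum_univ_two, vec0, vec1]
      rw [show ((3:ℝ)/5)^2 + ((4:ℝ)/5)^2 = 1 by norm_num]
      exact Real.sqrt_one
    · intro i
      fin_cases i
      · show (2:ℝ)/5 ≤ 1 * ⟪vec (3/5) (4/5), vec 1 0⟫
        rw [one_mul, inner2, vec0, vec0, vec1, vec1]
        norm_num
      · show (2:ℝ)/5 ≤ 1 * ⟪vec (3/5) (4/5), vec 0 (1/2)⟫
        rw [one_mul, inner2, vec0, vec0, vec1, vec1]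
        norm_num
  · rintro wbar hyp ⟨u, hu⟩
    have ew0 : ∀ w : EuclideanSpace ℝ (Fin 2), (1:ℝ) * ⟪w, vec 1 0⟫ = w 0 := fun w => by
      rw [inner2, vec0, vec1]; ring
    have ew1 : ∀ w : EuclideanSpace ℝ (Fin 2), (1:ℝ) * ⟪w, vec 0 (1/2)⟫ = w 1 / 2 := fun w => by
      rw [inner2, vec0, vec1]; ring
    have hmain : ∀ B : ℝ, 0 < B →
        ((wbar B 0)^2 + (wbar B 1)^2 ≤ B^2) ∧
        (∀ v1 v2 : ℝ, v1^2 + v2^2 ≤ B^2 →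
          L (wbar B 0) + L (wbar B 1 / 2) ≤ L v1 + L (v2/2)) := by
      intro B hB
      obtain ⟨hnormB, hminE⟩ := hyp B hB.le
      refine ⟨(norm_le_iff _ hB.le).mp hnormB, ?_⟩
      intro v1 v2 hv
      have hv' : ‖vec v1 v2‖ ≤ B := (norm_le_iff _ hB.le).mpr (by rw [vec0, vec1]; exact hv)
      have h2 := hminE (vec v1 v2) hv'
      simp only [Fin.sum_univ_two, Matrix.cons_val_zero, Matrix.cons_val_one,
        Matrix.head_cons] at h2
      rw [ew0, ew1, ew0, ew1, vec0, vec1] at h2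
      have hc : ((2:ℕ):ℝ) = 2 := by norm_num
      rw [hc] at h2
      linarith
    -- regime A constancy
    have cA : ∀ k : ℕ, ((5:ℝ)^(4*k+2))⁻¹ • wbar ((5:ℝ)^(4*k+2))
        = vec (2/Real.sqrt 5) (1/Real.sqrt 5) := by
      intro k
      obtain ⟨hle, hmin⟩ := hmain (M k) (M_pos k)
      obtain ⟨e1, e2⟩ := regimeA k hle hmin
      have hMne : (M k) ≠ 0 := (M_pos k).ne'
      have : (M k)⁻¹ • wbar (M k) = vec (2/Real.sqrt 5) (1/Real.sqrt 5) := by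
        ext i
        fin_cases i
        · show (M k)⁻¹ * wbar (M k) 0 = vec (2/Real.sqrt 5) (1/Real.sqrt 5) 0
          rw [e1, vec0]; field_simp
        · show (M k)⁻¹ * wbar (M k) 1 = vec (2/Real.sqrt 5) (1/Real.sqrt 5) 1
          rw [e2, vec1]; field_simp
      exact this
    have cB : ∀ k : ℕ, ((5:ℝ)^(4*k+4))⁻¹ • wbar ((5:ℝ)^(4*k+4))
        = vec (Real.sqrt 2/Real.sqrt 6) (2/Real.sqrt 6) := by
      intro k
      have hBpos : (0:ℝ) < (5:ℝ)^(4*k+4) := by positivity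
      obtain ⟨hle, hmin⟩ := hmain ((5:ℝ)^(4*k+4)) hBpos
      obtain ⟨e1, e2⟩ := regimeB k hle hmin
      have hne : ((5:ℝ)^(4*k+4)) ≠ 0 := hBpos.ne'
      ext i
      fin_cases i
      · show ((5:ℝ)^(4*k+4))⁻¹ * wbar ((5:ℝ)^(4*k+4)) 0
            = vec (Real.sqrt 2/Real.sqrt 6) (2/Real.sqrt 6) 0
        rw [e1, vec0]; field_simp
      · show ((5:ℝ)^(4*k+4))⁻¹ * wbar ((5:ℝ)^(4*k+4)) 1
            = vec (Real.sqrt 2/Real.sqrt 6) (2/Real.sqrt 6) 1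
        rw [e2, vec1]; field_simp
    have tA := hu.comp (tendsto_seq 2)
    have tB := hu.comp (tendsto_seq 4)
    have eA : ((fun B : ℝ => B⁻¹ • wbar B) ∘ fun k : ℕ => (5:ℝ)^(4*k+2))
        = fun _ => vec (2/Real.sqrt 5) (1/Real.sqrt 5) := funext fun k => cA k
    have eB : ((fun B : ℝ => B⁻¹ • wbar B) ∘ fun k : ℕ => (5:ℝ)^(4*k+4))
        = fun _ => vec (Real.sqrt 2/Real.sqrt 6) (2/Real.sqrt 6) := funext fun k => cB k
    rw [eA] at tA
    rw [eB] at tB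
    have hA : vec (2/Real.sqrt 5) (1/Real.sqrt 5) = u :=
      tendsto_nhds_unique tendsto_const_nhds tA
    have hB' : vec (Real.sqrt 2/Real.sqrt 6) (2/Real.sqrt 6) = u :=
      tendsto_nhds_unique tendsto_const_nhds tB
    have hvec := hA.trans hB'.symm
    have hcomp : (2:ℝ)/Real.sqrt 5 = Real.sqrt 2/Real.sqrt 6 := by
      calc (2:ℝ)/Real.sqrt 5 = (vec (2/Real.sqrt 5) (1/Real.sqrt 5)) 0 := (vec0 _ _).symm
        _ = (vec (Real.sqrt 2/Real.sqrt 6) (2/Real.sqrt 6)) 0 := by rw [hvec]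
        _ = Real.sqrt 2/Real.sqrt 6 := vec0 _ _
    have h5 : (0:ℝ) < Real.sqrt 5 := Real.sqrt_pos.mpr (by norm_num)
    have h6 : (0:ℝ) < Real.sqrt 6 := Real.sqrt_pos.mpr (by norm_num)
    have h2' : (0:ℝ) < Real.sqrt 2 := Real.sqrt_pos.mpr (by norm_num)
    have hcross : 2*Real.sqrt 6 = Real.sqrt 2*Real.sqrt 5 := by
      field_simp at hcomp
      linarith
    have hsq := congrArg (fun x : ℝ => x^2) hcross
    simp only [mul_pow] at hsq
    rw [Real.sq_sqrt (by norm_num : (0:ℝ) ≤ 6), Real.sq_sqrt (by norm_num : (0:ℝ) ≤ 2),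
      Real.sq_sqrt (by norm_num : (0:ℝ) ≤ 5)] at hsq
    norm_num at hsq
end

section
/- For every C₀ > 1 there exist C₁ > C₀ and a function ℓ₁ : ℝ → ℝ that is convex, differentiable with 2-Lipschitz derivative, and satisfies ℓ₁(z) = e^{−z} for z ∈ [1, C₀] and ℓ₁(z) = 1/z for z ∈ [C₁, ∞). Similarly, for every C₀ > 1 there exist C₂ > C₀ and a convex, differentiable ℓ₂ with 2-Lipschitz derivative satisfying ℓ₂(z) = 1/z for z ∈ [1, C₀] and ℓ₂(z) = e^{−z} for z ∈ [C₂, ∞). -/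
open Filter




private lemma exp_lip {u v : ℝ} (hu : u ≤ 0) (huv : v ≤ u) :
    Real.exp u - Real.exp v ≤ u - v := by
  have h1 := Real.add_one_le_exp (v - u)
  have h2 : Real.exp v = Real.exp u * Real.exp (v - u) := by
    rw [← Real.exp_add]; ring_nf
  have h3 : Real.exp u ≤ 1 := Real.exp_le_one_iff.2 hu
  have h4 : 0 < Real.exp u := Real.exp_pos u
  nlinarith

private lemma invsq_lip {u v : ℝ} (h1 : 1 ≤ u) (h : u ≤ v) :
    (u ^ 2)⁻¹ - (v ^ 2)⁻¹ ≤ 2 * (v - u) := by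
  have hu : (0:ℝ) < u := by linarith
  have hv : (0:ℝ) < v := by linarith
  have hpos : (0:ℝ) < u ^ 2 * v ^ 2 := by positivity
  have huv : 1 ≤ u * v := by nlinarith
  have hsum : u + v ≤ 2 * (u * v) := by nlinarith
  have hq : u * v ≤ u ^ 2 * v ^ 2 := by nlinarith
  have key : v ^ 2 - u ^ 2 ≤ 2 * (v - u) * (u ^ 2 * v ^ 2) := by
    have e1 : v ^ 2 - u ^ 2 = (v - u) * (v + u) := by ring
    have e2 : (v - u) * (v + u) ≤ (v - u) * (2 * (u * v)) :=
      mul_le_mul_of_nonneg_left (by linarith) (by linarith)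
    have e3 : (v - u) * (2 * (u * v)) ≤ (v - u) * (2 * (u ^ 2 * v ^ 2)) :=
      mul_le_mul_of_nonneg_left (by linarith) (by linarith)
    nlinarith
  have heq : (u ^ 2)⁻¹ - (v ^ 2)⁻¹ = (v ^ 2 - u ^ 2) / (u ^ 2 * v ^ 2) := by
    field_simp
  rw [heq, div_le_iff₀ hpos]; linarith

private lemma invsq_anti {u v : ℝ} (h1 : 0 < u) (h : u ≤ v) :
    (v ^ 2)⁻¹ ≤ (u ^ 2)⁻¹ := by
  apply inv_anti₀ (by positivity)
  nlinarith

private lemma max1_lip {z z' : ℝ} (h : z ≤ z') : max z' 1 - max z 1 ≤ z' - z := by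
  rcases le_total z 1 with h1 | h1 <;> rcases le_total z' 1 with h2 | h2 <;>
    simp [max_eq_left, max_eq_right, max_eq_left_iff, max_eq_right_iff, *] <;> linarith

private lemma glue_mono {g : ℝ → ℝ} {c : ℝ}
    (h1 : ∀ z z', z ≤ z' → z' ≤ c → g z ≤ g z')
    (h2 : ∀ z z', z ≤ z' → c ≤ z → g z ≤ g z') : Monotone g := by
  intro z z' h
  rcases le_total z' c with hc | hc
  · exact h1 z z' h hc
  · rcases le_total c z with hz | hz
    · exact h2 z z' h hz
    · exact (h1 z c hz le_rfl).trans (h2 c z' hc le_rfl)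

private lemma glue_mono_Ici {g : ℝ → ℝ} {c d : ℝ} (hcd : c ≤ d)
    (h1 : ∀ z z', z ≤ z' → c ≤ z → z' ≤ d → g z ≤ g z')
    (h2 : ∀ z z', z ≤ z' → d ≤ z → g z ≤ g z') :
    ∀ z z', z ≤ z' → c ≤ z → g z ≤ g z' := by
  intro z z' h hc
  rcases le_total z' d with hd | hd
  · exact h1 z z' h hc hd
  · rcases le_total d z with hz | hz
    · exact h2 z z' h hz
    · exact (h1 z d hz hc le_rfl).trans (h2 d z' hd le_rfl)

private lemma glue_lip {g : ℝ → ℝ} {c : ℝ}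
    (h1 : ∀ z z', z ≤ z' → z' ≤ c → g z' - g z ≤ 2 * (z' - z))
    (h2 : ∀ z z', z ≤ z' → c ≤ z → g z' - g z ≤ 2 * (z' - z)) :
    ∀ z z', z ≤ z' → g z' - g z ≤ 2 * (z' - z) := by
  intro z z' h
  rcases le_total z' c with hc | hc
  · exact h1 z z' h hc
  · rcases le_total c z with hz | hz
    · exact h2 z z' h hz
    · have a1 := h1 z c hz le_rfl
      have a2 := h2 c z' hc le_rfl
      linarith

private lemma glue_lip_Ici {g : ℝ → ℝ} {c d : ℝ} (hcd : c ≤ d)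
    (h1 : ∀ z z', z ≤ z' → c ≤ z → z' ≤ d → g z' - g z ≤ 2 * (z' - z))
    (h2 : ∀ z z', z ≤ z' → d ≤ z → g z' - g z ≤ 2 * (z' - z)) :
    ∀ z z', z ≤ z' → c ≤ z → g z' - g z ≤ 2 * (z' - z) := by
  intro z z' h hc
  rcases le_total z' d with hd | hd
  · exact h1 z z' h hc hd
  · rcases le_total d z with hz | hz
    · exact h2 z z' h hz
    · have a1 := h1 z d hz hc le_rfl
      have a2 := h2 d z' hd le_rfl
      linarith

private lemma build (g : ℝ → ℝ) (v : ℝ) (hg : Continuous g) (hm : Monotone g)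
    (hlip : ∀ z z', z ≤ z' → g z' - g z ≤ 2 * (z' - z)) :
    ∃ ℓ : ℝ → ℝ, ConvexOn ℝ Set.univ ℓ ∧ Differentiable ℝ ℓ ∧
      (∀ z z', |deriv ℓ z - deriv ℓ z'| ≤ 2 * |z - z'|) ∧
      (∀ z, ℓ z = v + ∫ t in (1:ℝ)..z, g t) := by
  set ℓ : ℝ → ℝ := fun z => v + ∫ t in (1:ℝ)..z, g t with hℓ
  have hder : ∀ z, HasDerivAt ℓ (g z) z := by
    intro z
    have h1 : HasDerivAt (fun u => ∫ t in (1:ℝ)..u, g t) (g z) z :=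
      intervalIntegral.integral_hasDerivAt_right (hg.intervalIntegrable _ _)
        (hg.stronglyMeasurableAtFilter _ _) hg.continuousAt
    simpa [hℓ] using h1.const_add v
  have hdiff : Differentiable ℝ ℓ := fun z => (hder z).differentiableAt
  have hderiv : deriv ℓ = g := funext fun z => (hder z).deriv
  refine ⟨ℓ, ?_, hdiff, ?_, fun z => rfl⟩
  · exact Monotone.convexOn_univ_of_deriv hdiff (hderiv ▸ hm)
  · intro z z'
    rw [hderiv]
    rcases le_total z z' with h | h
    · have h1 := hlip z z' h
      have h2 : g z ≤ g z' := hm h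
      rw [abs_sub_comm (g z), abs_of_nonneg (by linarith), abs_sub_comm z,
        abs_of_nonneg (by linarith)]
      linarith
    · have h1 := hlip z' z h
      have h2 : g z' ≤ g z := hm h
      rw [abs_of_nonneg (by linarith), abs_of_nonneg (by linarith)]
      linarith



-- basic exponential inequalities
private lemma exp_neg_lt_inv {a : ℝ} (ha : 0 < a) : Real.exp (-a) < a⁻¹ := by
  have h1 : a < Real.exp a := by
    have := Real.add_one_le_exp a; linarith
  rw [Real.exp_neg]
  exact inv_strictAnti₀ ha h1

private lemma sq_le_exp {a : ℝ} (ha : 1 < a) : a ^ 2 ≤ Real.exp a := by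
  have h1 := Real.add_one_le_exp (a / 2 - 1)
  have h2 : Real.exp (a / 2 - 1) * Real.exp 1 = Real.exp (a / 2) := by
    rw [← Real.exp_add]; ring_nf
  have h3 : (2.7182818283 : ℝ) < Real.exp 1 := Real.exp_one_gt_d9
  have h4 : Real.exp (a / 2) * Real.exp (a / 2) = Real.exp a := by
    rw [← Real.exp_add]; ring_nf
  have h5 : (0:ℝ) < Real.exp (a / 2 - 1) := Real.exp_pos _
  have h6 : a / 2 * Real.exp 1 ≤ Real.exp (a / 2) := by
    calc a / 2 * Real.exp 1 ≤ Real.exp (a / 2 - 1) * Real.exp 1 := by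
          apply mul_le_mul_of_nonneg_right (by linarith) (by positivity)
      _ = Real.exp (a / 2) := h2
  have h7 : 0 ≤ a / 2 * Real.exp 1 := by positivity
  have h8 := mul_le_mul h6 h6 h7 (Real.exp_pos (a/2)).le
  rw [h4] at h8
  have he4 : (0:ℝ) ≤ Real.exp 1 * Real.exp 1 - 4 := by nlinarith
  have h9 : a ^ 2 ≤ a / 2 * Real.exp 1 * (a / 2 * Real.exp 1) := by
    nlinarith [mul_nonneg (sq_nonneg a) he4]
  linarith

private lemma exp_neg_le_inv_sq {a : ℝ} (ha : 1 < a) : Real.exp (-a) ≤ (a ^ 2)⁻¹ := by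
  rw [Real.exp_neg]
  apply inv_anti₀ (by positivity) (sq_le_exp ha)

private lemma mul_exp_neg_le {a : ℝ} (ha : 1 ≤ a) : a * Real.exp (-a) ≤ Real.exp (-1) := by
  have h1 := Real.add_one_le_exp (a - 1)
  have h2 : Real.exp (a - 1) * Real.exp (-a) = Real.exp (-1) := by
    rw [← Real.exp_add]; ring_nf
  have h3 : (0:ℝ) < Real.exp (-a) := Real.exp_pos _
  nlinarith

private lemma exp_neg_one_lt_half : Real.exp (-1) < 1/2 := by
  have h3 : (2.7182818283 : ℝ) < Real.exp 1 := Real.exp_one_gt_d9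
  rw [Real.exp_neg]
  have h := inv_strictAnti₀ (by norm_num : (0:ℝ) < 2) (by linarith : (2:ℝ) < Real.exp 1)
  norm_num at h ⊢
  linarith

-- lower bound for exp (a/2)
private lemma exp_half_lb {a : ℝ} (ha : 1 < a) : 1 + a/2 + a^2/16 ≤ Real.exp (a/2) := by
  have h1 := Real.add_one_le_exp (a / 4)
  have h2 : Real.exp (a/4) * Real.exp (a/4) = Real.exp (a/2) := by
    rw [← Real.exp_add]; ring_nf
  nlinarith [Real.exp_pos (a/4)]


private lemma exp_half_mul_lb {a : ℝ} (ha : 1 < a) : a / 2 * Real.exp 1 ≤ Real.exp (a / 2) := by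
  have h1 := Real.add_one_le_exp (a / 2 - 1)
  have h2 : Real.exp (a / 2 - 1) * Real.exp 1 = Real.exp (a / 2) := by
    rw [← Real.exp_add]; ring_nf
  have h5 : (0:ℝ) < Real.exp (a / 2 - 1) := Real.exp_pos _
  calc a / 2 * Real.exp 1 ≤ Real.exp (a / 2 - 1) * Real.exp 1 := by
        apply mul_le_mul_of_nonneg_right (by linarith) (by positivity)
    _ = Real.exp (a / 2) := h2

private lemma root2 (a : ℝ) (ha : 1 < a) :
    ∃ b : ℝ, a < b ∧
      a⁻¹ - (b - a) * ((a ^ 2)⁻¹ + Real.exp (-b)) / 2 - Real.exp (-b) = 0 := by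
  set φ : ℝ → ℝ := fun b => a⁻¹ - (b - a) * ((a ^ 2)⁻¹ + Real.exp (-b)) / 2 - Real.exp (-b)
    with hφ
  have ha0 : (0:ℝ) < a := by linarith
  have hcont : ContinuousOn φ (Set.Icc a (3*a+1)) := by
    apply Continuous.continuousOn
    fun_prop
  have hpos : 0 < φ a := by
    have := exp_neg_lt_inv ha0
    simp only [hφ, sub_self, zero_mul, zero_div, sub_zero]
    linarith
  have hneg : φ (3*a+1) < 0 := by
    simp only [hφ]
    have h1 : (0:ℝ) < Real.exp (-(3*a+1)) := Real.exp_pos _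
    have h2 : a * a⁻¹ = 1 := mul_inv_cancel₀ (ne_of_gt ha0)
    have h3 : a^2 * (a^2)⁻¹ = 1 := mul_inv_cancel₀ (by positivity)
    have h4 : (0:ℝ) < (a^2)⁻¹ := by positivity
    have h5 : (0:ℝ) < a⁻¹ := by positivity
    nlinarith
  have hab : a ≤ 3*a+1 := by linarith
  have := intermediate_value_Icc' hab hcont
  have h0 : (0:ℝ) ∈ Set.Icc (φ (3*a+1)) (φ a) := ⟨le_of_lt hneg, le_of_lt hpos⟩
  obtain ⟨b, hbmem, hb⟩ := this h0
  refine ⟨b, ?_, hb⟩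
  rcases eq_or_lt_of_le hbmem.1 with h | h
  · exfalso; rw [← h] at hb; linarith
  · exact h

private lemma root1 (a : ℝ) (ha : 1 < a) :
    ∃ b : ℝ, Real.exp (a/2) < b ∧
      Real.exp (-a) * (1 - (Real.exp (-a) - (b ^ 2)⁻¹) / 2)
        + ((Real.exp (-a) - (b ^ 2)⁻¹) / 2) ^ 2
        - (b - a - (Real.exp (-a) - (b ^ 2)⁻¹) / 2) * (b ^ 2)⁻¹ - b⁻¹ = 0 := by
  set E : ℝ := Real.exp (-a) with hEdef
  set lo : ℝ := Real.exp (a/2) with hlodef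
  set hi : ℝ := 4 * Real.exp a + a + 1 with hhidef
  set χ : ℝ → ℝ := fun b =>
    E * (1 - (E - (b ^ 2)⁻¹) / 2) + ((E - (b ^ 2)⁻¹) / 2) ^ 2
      - (b - a - (E - (b ^ 2)⁻¹) / 2) * (b ^ 2)⁻¹ - b⁻¹ with hχdef
  set P : ℝ → ℝ := fun b =>
    E * b ^ 4 - E * ((E * b ^ 2 - 1) / 2) * b ^ 2 + ((E * b ^ 2 - 1) / 2) ^ 2
      + (E * b ^ 2 - 1) / 2 - (b - a) * b ^ 2 - b ^ 3 with hPdef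
  have hEpos : 0 < E := Real.exp_pos _
  have hlopos : 0 < lo := Real.exp_pos _
  have hEexp : E * Real.exp a = 1 := by
    rw [hEdef, ← Real.exp_add]; simp
  have hrel : ∀ b : ℝ, b ≠ 0 → P b = b ^ 4 * χ b := by
    intro b hb
    simp only [hPdef, hχdef]
    field_simp
    ring
  have hlo2 : E * lo ^ 2 = 1 := by
    rw [hlodef, pow_two, ← Real.exp_add]
    have : a / 2 + a / 2 = a := by ring
    rw [this, hEexp]
  have hlolb : 1 + a/2 + a^2/16 ≤ lo := exp_half_lb ha
  have hPlo : P lo < 0 := by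
    have heq : P lo = lo ^ 2 * (1 + a - 2 * lo) := by
      simp only [hPdef]
      linear_combination (lo ^ 2 - (E * lo ^ 2 - 1) / 4) * hlo2
    rw [heq]
    apply mul_neg_of_pos_of_neg (by positivity)
    nlinarith
  -- chi hi ≥ 0
  have hhi1 : 1 < hi := by
    have := Real.exp_pos a; rw [hhidef]; linarith
  have hhipos : 0 < hi := by linarith
  have hhi4 : 4 * Real.exp a ≤ hi := by rw [hhidef]; linarith
  have hxpos : (0:ℝ) < (hi ^ 2)⁻¹ := by positivity
  have hypos : (0:ℝ) < hi⁻¹ := by positivity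
  have hx2 : hi ^ 2 * (hi ^ 2)⁻¹ = 1 := mul_inv_cancel₀ (by positivity)
  have hy1 : hi * hi⁻¹ = 1 := mul_inv_cancel₀ (ne_of_gt hhipos)
  have hix : hi * (hi ^ 2)⁻¹ = hi⁻¹ := by
    field_simp
  have hexpapos := Real.exp_pos a
  have hxE : (hi ^ 2)⁻¹ ≤ E := by
    rw [hEdef, Real.exp_neg]
    apply inv_anti₀ hexpapos
    nlinarith
  have hyE : hi⁻¹ ≤ E / 4 := by
    have h1 : hi⁻¹ ≤ (4 * Real.exp a)⁻¹ := inv_anti₀ (by positivity) hhi4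
    have h2 : (4 * Real.exp a)⁻¹ = E / 4 := by
      rw [hEdef, Real.exp_neg]
      field_simp
    linarith
  have hE12 : E ≤ 1/2 := by
    have h1 : E ≤ Real.exp (-1) := by
      rw [hEdef]; exact Real.exp_le_exp.2 (by linarith)
    linarith [exp_neg_one_lt_half]
  have hchihi : 0 ≤ χ hi := by
    simp only [hχdef]
    nlinarith [mul_nonneg (by linarith : (0:ℝ) ≤ a + (E - (hi ^ 2)⁻¹) / 2) hxpos.le,
      sq_nonneg ((E - (hi ^ 2)⁻¹) / 2),
      mul_le_mul_of_nonneg_left (sub_le_self E hxpos.le) hEpos.le]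
  have hPhi : 0 ≤ P hi := by
    rw [hrel hi (ne_of_gt hhipos)]
    exact mul_nonneg (by positivity) hchihi
  have hlohi : lo ≤ hi := by
    have h1 : lo ≤ Real.exp a := by
      rw [hlodef]; exact Real.exp_le_exp.2 (by linarith)
    rw [hhidef]; linarith
  have hPc : ContinuousOn P (Set.Icc lo hi) := by
    apply Continuous.continuousOn; fun_prop
  obtain ⟨b, hbmem, hPb⟩ := intermediate_value_Icc hlohi hPc ⟨hPlo.le, hPhi⟩
  have hbpos : 0 < b := lt_of_lt_of_le hlopos hbmem.1
  have hχb : χ b = 0 := by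
    have h1 := hrel b (ne_of_gt hbpos)
    rw [hPb] at h1
    have h4 : (0:ℝ) < b ^ 4 := by positivity
    have := h1.symm
    rcases mul_eq_zero.1 this with h | h
    · exact absurd h (ne_of_gt h4)
    · exact h
  refine ⟨b, ?_, hχb⟩
  rcases eq_or_lt_of_le hbmem.1 with h | h
  · exfalso; rw [← h] at hPb; linarith
  · exact h
open MeasureTheory

private lemma integral_negexp (p q : ℝ) :
    ∫ t in p..q, -Real.exp (-t) = Real.exp (-q) - Real.exp (-p) := by
  have h : ∀ t ∈ Set.uIcc p q, HasDerivAt (fun s => Real.exp (-s)) (-Real.exp (-t)) t := by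
    intro t _
    have h1 : HasDerivAt (fun s : ℝ => -s) (-1) t := hasDerivAt_neg t
    have h2 := h1.exp
    simpa using h2
  exact intervalIntegral.integral_eq_sub_of_hasDerivAt h
    (Continuous.intervalIntegrable (by fun_prop) p q)

private lemma integral_neginvsq {p q : ℝ} (hp : 0 < p) (hpq : p ≤ q) :
    ∫ t in p..q, -(t ^ 2)⁻¹ = q⁻¹ - p⁻¹ := by
  have huIcc : Set.uIcc p q = Set.Icc p q := Set.uIcc_of_le hpq
  have h : ∀ t ∈ Set.uIcc p q, HasDerivAt (fun s : ℝ => s⁻¹) (-(t ^ 2)⁻¹) t := by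
    intro t ht
    rw [huIcc] at ht
    exact hasDerivAt_inv (ne_of_gt (lt_of_lt_of_le hp ht.1))
  refine intervalIntegral.integral_eq_sub_of_hasDerivAt h ?_
  apply ContinuousOn.intervalIntegrable
  apply ContinuousOn.neg
  apply ContinuousOn.inv₀ ((continuous_pow 2).continuousOn)
  intro t ht
  rw [huIcc] at ht
  exact pow_ne_zero 2 (ne_of_gt (lt_of_lt_of_le hp ht.1))

private lemma integral_linear (p q c d : ℝ) :
    ∫ t in p..q, (c + d * (t - p)) = c * (q - p) + d * ((q - p) ^ 2 / 2) := by
  have h : ∀ t ∈ Set.uIcc p q,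
      HasDerivAt (fun s => c * (s - p) + d * ((s - p) ^ 2 / 2)) (c + d * (t - p)) t := by
    intro t _
    have h1 : HasDerivAt (fun s : ℝ => s - p) 1 t := (hasDerivAt_id t).sub_const p
    have h2 : HasDerivAt (fun s : ℝ => c * (s - p)) (c * 1) t := h1.const_mul c
    have h3 := h1.pow 2
    have h4 := (h3.div_const 2).const_mul d
    have h5 := h2.add h4
    refine h5.congr_deriv ?_
    push_cast
    ring
  rw [intervalIntegral.integral_eq_sub_of_hasDerivAt h
    (Continuous.intervalIntegrable (by fun_prop) p q)]
  ring
set_option maxHeartbeats 1000000 in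
private lemma part1 (C₀ : ℝ) (hC₀ : 1 < C₀) :
    ∃ C₁ : ℝ, C₀ < C₁ ∧ ∃ ℓ₁ : ℝ → ℝ,
      ConvexOn ℝ Set.univ ℓ₁ ∧
      Differentiable ℝ ℓ₁ ∧
      (∀ z z' : ℝ, |deriv ℓ₁ z - deriv ℓ₁ z'| ≤ 2 * |z - z'|) ∧
      (∀ z : ℝ, 1 ≤ z → z ≤ C₀ → ℓ₁ z = Real.exp (-z)) ∧
      (∀ z : ℝ, C₁ ≤ z → ℓ₁ z = 1 / z) := by
  obtain ⟨b, hlob, hroot⟩ := root1 C₀ hC₀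
  set E : ℝ := Real.exp (-C₀) with hE
  have hEpos : 0 < E := Real.exp_pos _
  have hlo_lb2 : C₀ / 2 * Real.exp 1 ≤ Real.exp (C₀/2) := exp_half_mul_lb hC₀
  have he1 : (2.7182818283:ℝ) < Real.exp 1 := Real.exp_one_gt_d9
  have hlo_gt : C₀ + 1/4 < Real.exp (C₀/2) := by
    nlinarith [mul_lt_mul_of_pos_left he1 (by linarith : (0:ℝ) < C₀/2)]
  have haltb : C₀ < b := by linarith
  have hb1 : 1 < b := by linarith
  have hbpos : (0:ℝ) < b := by linarith
  have hlo2 : Real.exp (C₀/2) * Real.exp (C₀/2) = Real.exp C₀ := by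
    rw [← Real.exp_add]; ring_nf
  have hb2 : Real.exp C₀ < b ^ 2 := by nlinarith [Real.exp_pos (C₀/2)]
  have hinvb2 : (b ^ 2)⁻¹ < E := by
    rw [hE, Real.exp_neg]
    exact inv_strictAnti₀ (Real.exp_pos C₀) hb2
  have hinvb2pos : (0:ℝ) < (b ^ 2)⁻¹ := by positivity
  set L : ℝ := (E - (b ^ 2)⁻¹) / 2 with hL
  set m : ℝ := C₀ + L with hm
  have hLpos : 0 < L := by rw [hL]; linarith
  have hEhalf : E ≤ 1/2 := by
    have h1 : E ≤ Real.exp (-1) := by rw [hE]; exact Real.exp_le_exp.2 (by linarith)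
    linarith [exp_neg_one_lt_half]
  have hL4 : L < 1/4 := by rw [hL]; linarith
  have hmb : m < b := by rw [hm]; linarith
  have ham : C₀ < m := by rw [hm]; linarith
  have hmax1 : ∀ z : ℝ, 1 ≤ z → max z 1 = z := fun z hz => max_eq_left hz
  obtain ⟨g, hg⟩ : ∃ g : ℝ → ℝ, g = fun z =>
      if z ≤ C₀ then -Real.exp (-(max z 1)) else if z ≤ m then -E + 2 * (z - C₀)
        else if z ≤ b then -(b ^ 2)⁻¹ else -((max z 1) ^ 2)⁻¹ := ⟨_, rfl⟩
  have hmL : 2 * (m - C₀) = E - (b ^ 2)⁻¹ := by rw [hm, hL]; ring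
  have ev1 : ∀ z : ℝ, z ≤ C₀ → g z = -Real.exp (-(max z 1)) := by
    intro z hz; rw [hg]; simp only [if_pos hz]
  have ev2 : ∀ z : ℝ, C₀ ≤ z → z ≤ m → g z = -E + 2 * (z - C₀) := by
    intro z h1 h2
    rcases le_or_gt z C₀ with h | h
    · have hzeq : z = C₀ := le_antisymm h h1
      subst hzeq
      rw [hg]; simp only [if_pos le_rfl]
      rw [hmax1 _ hC₀.le, hE]
      ring
    · rw [hg]; simp only [if_neg (not_le.2 h), if_pos h2]
  have ev3 : ∀ z : ℝ, m ≤ z → z ≤ b → g z = -(b ^ 2)⁻¹ := by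
    intro z h1 h2
    have hnc : ¬ z ≤ C₀ := not_le.2 (by linarith)
    rcases le_or_gt z m with h | h
    · have hzeq : z = m := le_antisymm h h1
      subst hzeq
      rw [hg]; simp only [if_neg hnc, if_pos le_rfl]
      linarith [hmL]
    · rw [hg]; simp only [if_neg hnc, if_neg (not_le.2 h), if_pos h2]
  have ev4 : ∀ z : ℝ, b ≤ z → g z = -(z ^ 2)⁻¹ := by
    intro z h1
    have hnc : ¬ z ≤ C₀ := not_le.2 (by linarith)
    have hnm : ¬ z ≤ m := not_le.2 (by linarith)
    rcases le_or_gt z b with h | h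
    · have hzeq : z = b := le_antisymm h h1
      subst hzeq
      rw [hg]; simp only [if_neg hnc, if_neg hnm, if_pos le_rfl]
    · rw [hg]; simp only [if_neg hnc, if_neg hnm, if_neg (not_le.2 h)]
      rw [hmax1 _ (by linarith)]
  have hexpmaxcont : Continuous (fun z : ℝ => -Real.exp (-(max z 1))) := by fun_prop
  have hmaxcont : Continuous (fun z : ℝ => -((max z 1) ^ 2)⁻¹) := by
    have h1 : Continuous (fun z : ℝ => max z 1) := continuous_id.max continuous_const
    have h2 : ∀ z : ℝ, (max z 1) ^ 2 ≠ 0 := fun z =>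
      pow_ne_zero 2 (ne_of_gt (lt_of_lt_of_le one_pos (le_max_right z 1)))
    exact ((h1.pow 2).inv₀ h2).neg
  have hgc : Continuous g := by
    rw [hg]
    have hinner2 : Continuous (fun z : ℝ =>
        if z ≤ b then -(b ^ 2)⁻¹ else -((max z 1) ^ 2)⁻¹) := by
      apply Continuous.if_le continuous_const hmaxcont continuous_id continuous_const
      intro x hx
      simp only [id_eq] at hx
      rw [hx, hmax1 _ (by linarith)]
    have hinner1 : Continuous (fun z : ℝ =>
        if z ≤ m then -E + 2 * (z - C₀) else
          if z ≤ b then -(b ^ 2)⁻¹ else -((max z 1) ^ 2)⁻¹) := by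
      apply Continuous.if_le (by fun_prop) hinner2 continuous_id continuous_const
      intro x hx
      simp only [id_eq] at hx
      rw [hx, if_pos hmb.le]
      linarith [hmL]
    apply Continuous.if_le hexpmaxcont hinner1 continuous_id continuous_const
    intro x hx
    simp only [id_eq] at hx
    rw [hx, hmax1 _ hC₀.le, if_pos ham.le, hE]
    ring
  have hmono : Monotone g := by
    apply glue_mono (c := C₀)
    · intro z z' hzz' hz'
      rw [ev1 z (le_trans hzz' hz'), ev1 z' hz']
      have h1 : max z 1 ≤ max z' 1 := max_le_max hzz' le_rfl
      have := Real.exp_le_exp.2 (neg_le_neg h1)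
      linarith
    · apply glue_mono_Ici ham.le
      · intro z z' h1 h2 h3
        rw [ev2 z h2 (h1.trans h3), ev2 z' (h2.trans h1) h3]
        linarith
      · apply glue_mono_Ici hmb.le
        · intro z z' h1 h2 h3
          rw [ev3 z h2 (h1.trans h3), ev3 z' (h2.trans h1) h3]
        · intro z z' h1 h2
          rw [ev4 z h2, ev4 z' (h2.trans h1)]
          have := invsq_anti (by linarith : (0:ℝ) < z) h1
          linarith
  have hlip : ∀ z z', z ≤ z' → g z' - g z ≤ 2 * (z' - z) := by
    apply glue_lip (c := C₀)
    · intro z z' hzz' hz'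
      rw [ev1 z (le_trans hzz' hz'), ev1 z' hz']
      have h1 : max z 1 ≤ max z' 1 := max_le_max hzz' le_rfl
      have h2 : -(max z 1) ≤ 0 := by
        have := le_max_right z 1; linarith
      have h3 := exp_lip h2 (by linarith : -(max z' 1) ≤ -(max z 1))
      have h4 := max1_lip hzz'
      linarith
    · apply glue_lip_Ici ham.le
      · intro z z' h1 h2 h3
        rw [ev2 z h2 (h1.trans h3), ev2 z' (h2.trans h1) h3]
        linarith
      · apply glue_lip_Ici hmb.le
        · intro z z' h1 h2 h3
          rw [ev3 z h2 (h1.trans h3), ev3 z' (h2.trans h1) h3]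
          linarith
        · intro z z' h1 h2
          rw [ev4 z h2, ev4 z' (h2.trans h1)]
          have := invsq_lip (by linarith : (1:ℝ) ≤ z) h1
          linarith
  obtain ⟨ℓ, hconv, hdiff, hlip2, hval⟩ := build g (Real.exp (-1)) hgc hmono hlip
  refine ⟨b, haltb, ℓ, hconv, hdiff, hlip2, ?_, ?_⟩
  · intro z h1z hzC
    rw [hval z]
    have hcongr : Set.EqOn g (fun t => -Real.exp (-t)) (Set.uIcc 1 z) := by
      intro t ht
      rw [Set.uIcc_of_le h1z] at ht
      rw [ev1 t (ht.2.trans hzC), hmax1 t ht.1]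
    rw [intervalIntegral.integral_congr hcongr, integral_negexp 1 z]
    ring
  · intro z hbz
    rw [hval z]
    have hi : ∀ p q : ℝ, IntervalIntegrable g MeasureTheory.volume p q :=
      fun p q => hgc.intervalIntegrable p q
    rw [← intervalIntegral.integral_add_adjacent_intervals (hi 1 C₀) (hi C₀ z),
        ← intervalIntegral.integral_add_adjacent_intervals (hi C₀ m) (hi m z),
        ← intervalIntegral.integral_add_adjacent_intervals (hi m b) (hi b z)]
    have hA : ∫ t in (1:ℝ)..C₀, g t = E - Real.exp (-1) := by
      have hcongr : Set.EqOn g (fun t => -Real.exp (-t)) (Set.uIcc 1 C₀) := by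
        intro t ht
        rw [Set.uIcc_of_le hC₀.le] at ht
        rw [ev1 t ht.2, hmax1 t ht.1]
      rw [intervalIntegral.integral_congr hcongr, integral_negexp 1 C₀, ← hE]
    have hB : ∫ t in C₀..m, g t = -E * (m - C₀) + 2 * ((m - C₀) ^ 2 / 2) := by
      have hcongr : Set.EqOn g (fun t => -E + 2 * (t - C₀)) (Set.uIcc C₀ m) := by
        intro t ht
        rw [Set.uIcc_of_le ham.le] at ht
        exact ev2 t ht.1 ht.2
      rw [intervalIntegral.integral_congr hcongr, integral_linear C₀ m (-E) 2]
    have hCc : ∫ t in m..b, g t = (b - m) * (-(b ^ 2)⁻¹) := by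
      have hcongr : Set.EqOn g (fun _ => -(b ^ 2)⁻¹) (Set.uIcc m b) := by
        intro t ht
        rw [Set.uIcc_of_le hmb.le] at ht
        exact ev3 t ht.1 ht.2
      rw [intervalIntegral.integral_congr hcongr, intervalIntegral.integral_const,
        smul_eq_mul]
    have hD : ∫ t in b..z, g t = z⁻¹ - b⁻¹ := by
      have hcongr : Set.EqOn g (fun t => -(t ^ 2)⁻¹) (Set.uIcc b z) := by
        intro t ht
        rw [Set.uIcc_of_le hbz] at ht
        exact ev4 t ht.1
      rw [intervalIntegral.integral_congr hcongr, integral_neginvsq hbpos hbz]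
    rw [hA, hB, hCc, hD, one_div, hm]
    linear_combination hroot
set_option maxHeartbeats 1000000 in
private lemma part2 (C₀ : ℝ) (hC₀ : 1 < C₀) :
    ∃ C₂ : ℝ, C₀ < C₂ ∧ ∃ ℓ₂ : ℝ → ℝ,
      ConvexOn ℝ Set.univ ℓ₂ ∧
      Differentiable ℝ ℓ₂ ∧
      (∀ z z' : ℝ, |deriv ℓ₂ z - deriv ℓ₂ z'| ≤ 2 * |z - z'|) ∧
      (∀ z : ℝ, 1 ≤ z → z ≤ C₀ → ℓ₂ z = 1 / z) ∧
      (∀ z : ℝ, C₂ ≤ z → ℓ₂ z = Real.exp (-z)) := by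
  obtain ⟨b, hab, heq⟩ := root2 C₀ hC₀
  have ha0 : (0:ℝ) < C₀ := by linarith
  have hb1 : (1:ℝ) < b := by linarith
  have hd : (0:ℝ) < b - C₀ := by linarith
  set s : ℝ := Real.exp (-b) with hs
  have hspos : 0 < s := Real.exp_pos _
  have hslt : s < Real.exp (-C₀) := by rw [hs]; exact Real.exp_lt_exp.2 (by linarith)
  have hsa2 : s < (C₀ ^ 2)⁻¹ := lt_of_lt_of_le hslt (exp_neg_le_inv_sq hC₀)
  set γ : ℝ := ((C₀ ^ 2)⁻¹ - s) / (2 * (b - C₀)) with hγ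
  have hγpos : 0 < γ := div_pos (by linarith) (by linarith)
  have hainv : C₀ * C₀⁻¹ = 1 := mul_inv_cancel₀ (ne_of_gt ha0)
  have ha2inv : C₀ ^ 2 * (C₀ ^ 2)⁻¹ = 1 := mul_inv_cancel₀ (by positivity)
  have hi2pos : (0:ℝ) < (C₀ ^ 2)⁻¹ := by positivity
  have hipos : (0:ℝ) < C₀⁻¹ := by positivity
  have hinvle : (C₀ ^ 2)⁻¹ ≤ C₀⁻¹ := by
    apply inv_anti₀ ha0; nlinarith
  have hinv1 : C₀⁻¹ ≤ 1 := by nlinarith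
  have hsa : s * C₀ < 1 / 2 := by
    have h1 := mul_exp_neg_le (le_of_lt hC₀)
    have h2 := exp_neg_one_lt_half
    have h3 : C₀ * s < C₀ * Real.exp (-C₀) :=
      mul_lt_mul_of_pos_left hslt ha0
    nlinarith
  have hs2 : 2 * s ≤ C₀⁻¹ := by
    nlinarith [mul_le_mul_of_nonneg_right hsa.le (by positivity : (0:ℝ) ≤ 2 * C₀⁻¹)]
  have hγ1 : γ ≤ 1 := by
    rw [hγ, div_le_one (by linarith)]
    have hAs : (0:ℝ) < (C₀ ^ 2)⁻¹ + s := by positivity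
    have h3 : (C₀ ^ 2)⁻¹ * (C₀ ^ 2)⁻¹ ≤ C₀⁻¹ := by nlinarith
    have key : ((C₀ ^ 2)⁻¹ - s) * ((C₀ ^ 2)⁻¹ + s) ≤ 2 * (b - C₀) * ((C₀ ^ 2)⁻¹ + s) := by
      nlinarith [heq, sq_nonneg s]
    exact le_of_mul_le_mul_right key hAs
  obtain ⟨g, hg⟩ : ∃ g : ℝ → ℝ, g = fun z =>
      if z ≤ C₀ then -((max z 1) ^ 2)⁻¹ else if z ≤ b then -(C₀ ^ 2)⁻¹ + 2 * γ * (z - C₀)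
        else -Real.exp (-z) := ⟨_, rfl⟩
  have hmax1 : ∀ z : ℝ, 1 ≤ z → max z 1 = z := fun z hz => max_eq_left hz
  have hγb : 2 * γ * (b - C₀) = (C₀ ^ 2)⁻¹ - s := by
    rw [hγ]; field_simp
  have ev1 : ∀ z : ℝ, z ≤ C₀ → g z = -((max z 1) ^ 2)⁻¹ := by
    intro z hz; rw [hg]; simp only [if_pos hz]
  have ev2 : ∀ z : ℝ, C₀ ≤ z → z ≤ b → g z = -(C₀ ^ 2)⁻¹ + 2 * γ * (z - C₀) := by
    intro z h1 h2
    rcases le_or_gt z C₀ with h | h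
    · have hzeq : z = C₀ := le_antisymm h h1
      subst hzeq
      rw [hg]; simp only [if_pos le_rfl]
      rw [hmax1 _ hC₀.le]
      ring
    · rw [hg]; simp only [if_neg (not_le.2 h), if_pos h2]
  have ev3 : ∀ z : ℝ, b ≤ z → g z = -Real.exp (-z) := by
    intro z h1
    have h2 : ¬ z ≤ C₀ := not_le.2 (by linarith)
    rcases le_or_gt z b with h | h
    · have hzeq : z = b := le_antisymm h h1
      subst hzeq
      rw [hg]; simp only [if_neg h2, if_pos le_rfl]
      rw [hγb, ← hs]
      ring
    · rw [hg]; simp only [if_neg h2, if_neg (not_le.2 h)]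
  have hmaxcont : Continuous (fun z : ℝ => -((max z 1) ^ 2)⁻¹) := by
    have h1 : Continuous (fun z : ℝ => max z 1) := continuous_id.max continuous_const
    have h2 : ∀ z : ℝ, (max z 1) ^ 2 ≠ 0 := fun z =>
      pow_ne_zero 2 (ne_of_gt (lt_of_lt_of_le one_pos (le_max_right z 1)))
    exact ((h1.pow 2).inv₀ h2).neg
  have hgc : Continuous g := by
    rw [hg]
    have hinner : Continuous (fun z : ℝ =>
        if z ≤ b then -(C₀ ^ 2)⁻¹ + 2 * γ * (z - C₀) else -Real.exp (-z)) := by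
      apply Continuous.if_le (by fun_prop) (by fun_prop) continuous_id continuous_const
      intro x hx
      simp only [id_eq] at hx
      rw [hx, hγb, ← hs]
      ring
    apply Continuous.if_le hmaxcont hinner continuous_id continuous_const
    intro x hx
    simp only [id_eq] at hx
    rw [hx, hmax1 _ hC₀.le, if_pos hab.le]
    ring
  have hmono : Monotone g := by
    apply glue_mono (c := C₀)
    · intro z z' hzz' hz'
      rw [ev1 z (le_trans hzz' hz'), ev1 z' hz']
      have h1 : max z 1 ≤ max z' 1 := max_le_max hzz' le_rfl
      have h2 : (0:ℝ) < max z 1 := lt_of_lt_of_le one_pos (le_max_right z 1)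
      have := invsq_anti h2 h1
      linarith
    · apply glue_mono_Ici hab.le
      · intro z z' h1 h2 h3
        rw [ev2 z h2 (h1.trans h3), ev2 z' (h2.trans h1) h3]
        nlinarith
      · intro z z' h1 h2
        rw [ev3 z h2, ev3 z' (h2.trans h1)]
        have := Real.exp_le_exp.2 (neg_le_neg h1)
        linarith
  have hlip : ∀ z z', z ≤ z' → g z' - g z ≤ 2 * (z' - z) := by
    apply glue_lip (c := C₀)
    · intro z z' hzz' hz'
      rw [ev1 z (le_trans hzz' hz'), ev1 z' hz']
      have h1 : max z 1 ≤ max z' 1 := max_le_max hzz' le_rfl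
      have h2 : (1:ℝ) ≤ max z 1 := le_max_right z 1
      have h3 := invsq_lip h2 h1
      have h4 := max1_lip hzz'
      linarith
    · apply glue_lip_Ici hab.le
      · intro z z' h1 h2 h3
        rw [ev2 z h2 (h1.trans h3), ev2 z' (h2.trans h1) h3]
        nlinarith
      · intro z z' h1 h2
        rw [ev3 z h2, ev3 z' (h2.trans h1)]
        have hu : -z ≤ 0 := by linarith
        have := exp_lip hu (by linarith : -z' ≤ -z)
        linarith
  obtain ⟨ℓ, hconv, hdiff, hlip2, hval⟩ := build g 1 hgc hmono hlip
  refine ⟨b, hab, ℓ, hconv, hdiff, hlip2, ?_, ?_⟩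
  · intro z h1z hzC
    rw [hval z]
    have hcongr : Set.EqOn g (fun t => -(t ^ 2)⁻¹) (Set.uIcc 1 z) := by
      intro t ht
      rw [Set.uIcc_of_le h1z] at ht
      rw [ev1 t (ht.2.trans hzC), hmax1 t ht.1]
    rw [intervalIntegral.integral_congr hcongr, integral_neginvsq one_pos h1z, one_div]
    norm_num
  · intro z hbz
    rw [hval z]
    have hi : ∀ p q : ℝ, IntervalIntegrable g MeasureTheory.volume p q :=
      fun p q => hgc.intervalIntegrable p q
    rw [← intervalIntegral.integral_add_adjacent_intervals (hi 1 C₀) (hi C₀ z),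
        ← intervalIntegral.integral_add_adjacent_intervals (hi C₀ b) (hi b z)]
    have hA : ∫ t in (1:ℝ)..C₀, g t = C₀⁻¹ - 1 := by
      have hcongr : Set.EqOn g (fun t => -(t ^ 2)⁻¹) (Set.uIcc 1 C₀) := by
        intro t ht
        rw [Set.uIcc_of_le hC₀.le] at ht
        rw [ev1 t ht.2, hmax1 t ht.1]
      rw [intervalIntegral.integral_congr hcongr, integral_neginvsq one_pos hC₀.le]
      norm_num
    have hB : ∫ t in C₀..b, g t
        = -(C₀ ^ 2)⁻¹ * (b - C₀) + 2 * γ * ((b - C₀) ^ 2 / 2) := by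
      have hcongr : Set.EqOn g (fun t => -(C₀ ^ 2)⁻¹ + 2 * γ * (t - C₀)) (Set.uIcc C₀ b) := by
        intro t ht
        rw [Set.uIcc_of_le hab.le] at ht
        exact ev2 t ht.1 ht.2
      rw [intervalIntegral.integral_congr hcongr, integral_linear C₀ b (-(C₀ ^ 2)⁻¹) (2*γ)]
    have hCc : ∫ t in b..z, g t = Real.exp (-z) - Real.exp (-b) := by
      have hcongr : Set.EqOn g (fun t => -Real.exp (-t)) (Set.uIcc b z) := by
        intro t ht
        rw [Set.uIcc_of_le hbz] at ht
        exact ev3 t ht.1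
      rw [intervalIntegral.integral_congr hcongr, integral_negexp b z]
    rw [hA, hB, hCc]
    have hγsq : 2 * γ * ((b - C₀) ^ 2 / 2) = (b - C₀) * ((C₀ ^ 2)⁻¹ - s) / 2 := by
      rw [hγ]; field_simp
    rw [hγsq, ← hs]
    linear_combination heq

/-- For every `C₀ > 1` there exist `C₁ > C₀` and a convex,
differentiable function `ℓ₁` with 2-Lipschitz derivative which equals
`e^{−z}` on `[1, C₀]` and `1/z` on `[C₁, ∞)`; and likewise there exist
`C₂ > C₀` and a convex, differentiable `ℓ₂` with 2-Lipschitz derivative which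
equals `1/z` on `[1, C₀]` and `e^{−z}` on `[C₂, ∞)`. -/
theorem switch_between_exponential_and_reciprocal_tails (C₀ : ℝ) (hC₀ : 1 < C₀) :
    (∃ C₁ : ℝ, C₀ < C₁ ∧ ∃ ℓ₁ : ℝ → ℝ,
      ConvexOn ℝ Set.univ ℓ₁ ∧
      Differentiable ℝ ℓ₁ ∧
      (∀ z z' : ℝ, |deriv ℓ₁ z - deriv ℓ₁ z'| ≤ 2 * |z - z'|) ∧
      (∀ z : ℝ, 1 ≤ z → z ≤ C₀ → ℓ₁ z = Real.exp (-z)) ∧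
      (∀ z : ℝ, C₁ ≤ z → ℓ₁ z = 1 / z)) ∧
    (∃ C₂ : ℝ, C₀ < C₂ ∧ ∃ ℓ₂ : ℝ → ℝ,
      ConvexOn ℝ Set.univ ℓ₂ ∧
      Differentiable ℝ ℓ₂ ∧
      (∀ z z' : ℝ, |deriv ℓ₂ z - deriv ℓ₂ z'| ≤ 2 * |z - z'|) ∧
      (∀ z : ℝ, 1 ≤ z → z ≤ C₀ → ℓ₂ z = 1 / z) ∧
      (∀ z : ℝ, C₂ ≤ z → ℓ₂ z = Real.exp (-z))) :=
  ⟨part1 C₀ hC₀, part2 C₀ hC₀⟩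
end

section
/- Suppose ℓ is twice continuously differentiable with ℓ'' > 0, and the step size satisfies η ≤ 1/(2R(w_0)) and R(w_{t+1}) − R(w_t) ≤ −(η/2)‖∇R(w_t)‖² for all t. Then the projections onto S of both the gradient descent path and the regularization path converge to the unique minimizer v̄ of R_s over S: lim_{t→∞} Π_S w_t = v̄ and lim_{B→∞} Π_S w̄(B) = v̄. -/
open Filter RealInnerProductSpace
open scoped Classical

section helpers

variable {ℓ : ℝ → ℝ}

/-- strict tangent line inequality from strictly monotone derivative -/
lemma tangent_lt (hd : Differentiable ℝ ℓ) (hm : StrictMono (deriv ℓ))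
    {a b : ℝ} (hab : a ≠ b) : ℓ a + deriv ℓ a * (b - a) < ℓ b := by
  rcases lt_or_gt_of_ne hab with h | h
  · obtain ⟨c, hc, hceq⟩ := exists_hasDerivAt_eq_slope ℓ (deriv ℓ) h
      (hd.continuous.continuousOn) (fun z _ => (hd z).hasDerivAt)
    have h1 : deriv ℓ a < deriv ℓ c := hm hc.1
    rw [eq_div_iff (by intro hz; exact hab (by linarith [sub_eq_zero.mp hz]))] at hceq
    nlinarith
  · obtain ⟨c, hc, hceq⟩ := exists_hasDerivAt_eq_slope ℓ (deriv ℓ) h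
      (hd.continuous.continuousOn) (fun z _ => (hd z).hasDerivAt)
    have h1 : deriv ℓ c < deriv ℓ a := hm hc.2
    rw [eq_div_iff (by intro hz; exact hab (by linarith [sub_eq_zero.mp hz]))] at hceq
    nlinarith

lemma tangent_le (hd : Differentiable ℝ ℓ) (hm : StrictMono (deriv ℓ))
    (a b : ℝ) : ℓ a + deriv ℓ a * (b - a) ≤ ℓ b := by
  rcases eq_or_ne a b with rfl | hab
  · simp
  · exact (tangent_lt hd hm hab).le

lemma midpoint_lt (hd : Differentiable ℝ ℓ) (hm : StrictMono (deriv ℓ))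
    {p q : ℝ} (hpq : p ≠ q) : ℓ ((p + q) / 2) < (ℓ p + ℓ q) / 2 := by
  have h1 := tangent_lt hd hm (a := (p + q) / 2) (b := p) (by intro h; exact hpq (by linarith))
  have h2 := tangent_le hd hm ((p + q) / 2) q
  linarith

lemma midpoint_le (hd : Differentiable ℝ ℓ) (hm : StrictMono (deriv ℓ))
    (p q : ℝ) : ℓ ((p + q) / 2) ≤ (ℓ p + ℓ q) / 2 := by
  rcases eq_or_ne p q with rfl | hpq
  · rw [show (p + p) / 2 = p by ring]; linarith
  · exact (midpoint_lt hd hm hpq).le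

lemma hasGradientAt_risk {d n : ℕ} (ℓ : ℝ → ℝ) (hd : Differentiable ℝ ℓ)
    (c : ℝ) (y : Fin n → ℝ) (x : Fin n → EuclideanSpace ℝ (Fin d))
    (T : Finset (Fin n)) (w : EuclideanSpace ℝ (Fin d)) :
    HasGradientAt (fun w => c * ∑ i ∈ T, ℓ (y i * ⟪w, x i⟫))
      (c • ∑ i ∈ T, (deriv ℓ (y i * ⟪w, x i⟫) * y i) • x i) w := by
  rw [hasGradientAt_iff_hasFDerivAt]
  have hterm : ∀ i : Fin n, HasFDerivAt (fun v : EuclideanSpace ℝ (Fin d) => ℓ (y i * ⟪v, x i⟫))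
      ((deriv ℓ (y i * ⟪w, x i⟫) * y i) • (innerSL ℝ (x i))) w := by
    intro i
    have hlin : HasFDerivAt (fun v : EuclideanSpace ℝ (Fin d) => y i * ⟪v, x i⟫)
        (y i • (innerSL ℝ (x i))) w := by
      have heq : (fun v : EuclideanSpace ℝ (Fin d) => y i * ⟪v, x i⟫)
          = fun v => (y i • (innerSL ℝ (x i))) v := by
        funext v
        simp only [ContinuousLinearMap.smul_apply, innerSL_apply_apply, smul_eq_mul]
        rw [real_inner_comm]
      rw [heq]
      exact (y i • (innerSL ℝ (x i))).hasFDerivAt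
    have h2 := (hd (y i * ⟪w, x i⟫)).hasDerivAt.comp_hasFDerivAt w hlin
    refine h2.congr_fderiv ?_
    ext v
    simp only [ContinuousLinearMap.smul_apply, innerSL_apply_apply, smul_eq_mul]
    ring
  have hsum := HasFDerivAt.const_mul (HasFDerivAt.fun_sum (fun i (_ : i ∈ T) => hterm i)) c
  have key : (InnerProductSpace.toDual ℝ (EuclideanSpace ℝ (Fin d)))
      (c • ∑ i ∈ T, (deriv ℓ (y i * ⟪w, x i⟫) * y i) • x i)
      = c • ∑ i ∈ T, (deriv ℓ (y i * ⟪w, x i⟫) * y i) • (innerSL ℝ (x i)) := by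
    ext v
    simp only [InnerProductSpace.toDual_apply_apply, ContinuousLinearMap.smul_apply,
      ContinuousLinearMap.coe_sum', Finset.sum_apply, innerSL_apply_apply, smul_eq_mul,
      inner_smul_left, inner_sum, RCLike.star_def, conj_trivial, map_sum]
    rw [sum_inner, Finset.mul_sum, Finset.mul_sum]
    refine Finset.sum_congr rfl fun i _ => ?_
    rw [inner_smul_left, conj_trivial]
  rw [key]
  exact hsum

lemma continuous_finset_inf' {α ι : Type*} [TopologicalSpace α] {s : Finset ι}
    (hs : s.Nonempty) (f : ι → α → ℝ) (hf : ∀ i, Continuous (f i)) :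
    Continuous (fun u => s.inf' hs (fun i => f i u)) := by
  induction hs using Finset.Nonempty.cons_induction with
  | singleton i => simpa using hf i
  | cons i s his hs ih =>
      have : (fun u => (Finset.cons i s his).inf' (Finset.cons_nonempty his) (fun j => f j u))
          = fun u => min (f i u) (s.inf' hs (fun j => f j u)) := by
        funext u
        rw [Finset.inf'_cons]
      rw [this]
      exact (hf i).min ih

lemma tendsto_of_risk_tendsto {d : ℕ} (S : Submodule ℝ (EuclideanSpace ℝ (Fin d)))
    (Rs : EuclideanSpace ℝ (Fin d) → ℝ) (hcont : Continuous Rs)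
    (vbar : EuclideanSpace ℝ (Fin d))
    (hmin : ∀ v ∈ S, v ≠ vbar → Rs vbar < Rs v)
    (hcoer : ∀ c : ℝ, ∃ r, ∀ v ∈ S, Rs v ≤ c → ‖v‖ ≤ r)
    {α : Type*} {f : Filter α} (v : α → EuclideanSpace ℝ (Fin d))
    (hvS : ∀ a, v a ∈ S)
    (hRt : Tendsto (fun a => Rs (v a)) f (nhds (Rs vbar))) :
    Tendsto v f (nhds vbar) := by
  rw [Metric.tendsto_nhds]
  intro ε hε
  obtain ⟨r, hr⟩ := hcoer (Rs vbar + 1)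
  set K : Set (EuclideanSpace ℝ (Fin d)) :=
    {z | z ∈ S ∧ Rs z ≤ Rs vbar + 1 ∧ ε ≤ dist z vbar} with hKe
  have hKclosed : IsClosed K := by
    apply IsClosed.inter (Submodule.closed_of_finiteDimensional S)
    apply IsClosed.inter (isClosed_le hcont continuous_const)
    exact isClosed_le continuous_const (continuous_id.dist continuous_const)
  have hKbdd : Bornology.IsBounded K := by
    apply Bornology.IsBounded.subset (Metric.isBounded_closedBall (x := 0) (r := r))
    intro z hz
    simpa [Metric.mem_closedBall] using hr z hz.1 hz.2.1
  have hKcomp : IsCompact K := Metric.isCompact_of_isClosed_isBounded hKclosed hKbdd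
  rcases K.eq_empty_or_nonempty with hKem | hKne
  · have : ∀ᶠ a in f, Rs (v a) < Rs vbar + 1 :=
      hRt (Iio_mem_nhds (by linarith))
    filter_upwards [this] with a ha
    by_contra hcon
    push_neg at hcon
    have : v a ∈ K := ⟨hvS a, ha.le, hcon⟩
    rw [hKem] at this
    exact this
  · obtain ⟨z0, hz0K, hz0min⟩ := hKcomp.exists_isMinOn hKne hcont.continuousOn
    have hz0ne : z0 ≠ vbar := by
      intro h
      have := hz0K.2.2
      rw [h] at this
      simp at this
      linarith
    have hgt : Rs vbar < Rs z0 := hmin z0 hz0K.1 hz0ne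
    have : ∀ᶠ a in f, Rs (v a) < min (Rs z0) (Rs vbar + 1) := by
      apply hRt (Iio_mem_nhds _)
      simp only [lt_min_iff]
      exact ⟨hgt, by linarith⟩
    filter_upwards [this] with a ha
    by_contra hcon
    push_neg at hcon
    have hmem : v a ∈ K := ⟨hvS a, (lt_min_iff.mp ha).2.le, hcon⟩
    have hle : Rs z0 ≤ Rs (v a) := hz0min hmem
    have := (lt_min_iff.mp ha).1
    linarith

end helpers

set_option maxHeartbeats 1000000 in
/-- For a twice continuously differentiable loss with
`ℓ'' > 0` and an admissible step size, the projections onto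
`S := span{xᵢ : i ∈ D_s}` of both the gradient-descent path and the
regularization path converge to the unique minimizer `v̄` of the partial risk
`R_s` over `S`. -/
theorem projections_converge_to_unique_minimizer
    {d n : ℕ} (hn : 0 < n)
    (x : Fin n → EuclideanSpace ℝ (Fin d)) (y : Fin n → ℝ)
    (hx : ∀ i, ‖x i‖ ≤ 1) (hy : ∀ i, y i = 1 ∨ y i = -1)
    (ℓ : ℝ → ℝ)
    (hconv : ConvexOn ℝ Set.univ ℓ)
    (hanti : StrictAnti ℓ)
    (hlim0 : Tendsto ℓ atTop (nhds 0))
    (hC2 : ContDiff ℝ 2 ℓ)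
    (hℓ'' : ∀ z : ℝ, 0 < deriv (deriv ℓ) z)
    (R : EuclideanSpace ℝ (Fin d) → ℝ)
    (hR : R = fun w => (1 / (n : ℝ)) * ∑ i, ℓ (y i * ⟪w, x i⟫))
    (InC : Fin n → Prop)
    (hInC : ∀ i, InC i ↔ ∃ u : EuclideanSpace ℝ (Fin d), ‖u‖ = 1 ∧
      0 < y i * ⟪u, x i⟫ ∧ ∀ j, 0 ≤ y j * ⟪u, x j⟫)
    (S : Submodule ℝ (EuclideanSpace ℝ (Fin d)))
    (hS : S = Submodule.span ℝ {v | ∃ i, ¬ InC i ∧ x i = v})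
    (Rs : EuclideanSpace ℝ (Fin d) → ℝ)
    (hRs : Rs = fun w =>
      (1 / (n : ℝ)) * ∑ i ∈ Finset.univ.filter (fun i => ¬ InC i),
        ℓ (y i * ⟪w, x i⟫))
    (vbar : EuclideanSpace ℝ (Fin d))
    (hvbar : vbar ∈ S ∧ ∀ v ∈ S, Rs vbar ≤ Rs v)
    (η : ℝ) (hη : 0 < η)
    (w : ℕ → EuclideanSpace ℝ (Fin d))
    (hgd : ∀ t : ℕ, w (t + 1) = w t - η • gradient R (w t))
    (hη2 : η ≤ 1 / (2 * R (w 0)))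
    (hdesc : ∀ t : ℕ, R (w (t + 1)) - R (w t) ≤ -(η / 2) * ‖gradient R (w t)‖ ^ 2)
    (wbar : ℝ → EuclideanSpace ℝ (Fin d))
    (hwbar : ∀ B : ℝ, 0 ≤ B → ‖wbar B‖ ≤ B ∧ ∀ v, ‖v‖ ≤ B → R (wbar B) ≤ R v) :
    Tendsto (fun t : ℕ => (S.orthogonalProjection (w t) : EuclideanSpace ℝ (Fin d)))
      atTop (nhds vbar) ∧
    Tendsto (fun B : ℝ => (S.orthogonalProjection (wbar B) : EuclideanSpace ℝ (Fin d)))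
      atTop (nhds vbar) := by
  obtain ⟨hvS, hvmin⟩ := hvbar
  -- basic facts about ℓ
  have hd1 : Differentiable ℝ ℓ := hC2.differentiable (by norm_num)
  have hm : StrictMono (deriv ℓ) := strictMono_of_deriv_pos hℓ''
  have ℓpos : ∀ z : ℝ, 0 < ℓ z := by
    intro z
    have h1 : (0:ℝ) ≤ ℓ (z + 1) := by
      refine le_of_tendsto hlim0 ?_
      filter_upwards [eventually_ge_atTop (z + 1)] with u hu
      exact (hanti.antitone hu)
    have := hanti (show z < z + 1 by linarith)
    linarith
  have ℓ'neg : ∀ z : ℝ, deriv ℓ z < 0 := by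
    intro z
    by_contra hcon
    push_neg at hcon
    have := tangent_lt hd1 hm (a := z) (b := z + 1) (by norm_num)
    have h2 := hanti (show z < z + 1 by linarith)
    nlinarith
  have hnR : (0:ℝ) < (n:ℝ) := by exact_mod_cast hn
  have hyne : ∀ i, y i ≠ 0 := by
    intro i; rcases hy i with h | h <;> rw [h] <;> norm_num
  -- notation
  set Ds : Finset (Fin n) := Finset.univ.filter (fun i => ¬ InC i) with hDs
  set Dc : Finset (Fin n) := Finset.univ.filter (fun i => InC i) with hDc
  have hxS : ∀ i, ¬ InC i → x i ∈ S := by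
    intro i hi
    rw [hS]
    exact Submodule.subset_span ⟨i, hi, rfl⟩
  -- the orthogonality lemma
  have horth : ∀ z, z ∈ S → (∀ i, ¬ InC i → ⟪z, x i⟫ = 0) → z = 0 := by
    intro z hzS hzperp
    have hperpS : ∀ u ∈ S, ⟪u, z⟫ = 0 := by
      intro u huS
      rw [hS] at huS
      induction huS using Submodule.span_induction with
      | mem v hv =>
          obtain ⟨i, hi, hxi⟩ := hv
          rw [← hxi, real_inner_comm]
          exact hzperp i hi
      | zero => simp
      | add u v _ _ hu hv => rw [inner_add_left, hu, hv]; ring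
      | smul c u _ hu => rw [inner_smul_left, hu]; ring
    have := hperpS z hzS
    rwa [inner_self_eq_zero] at this
  -- the separating construction
  have hub : ∃ ubar : EuclideanSpace ℝ (Fin d), (∀ j, 0 ≤ y j * ⟪ubar, x j⟫) ∧ (∀ j, InC j → 0 < y j * ⟪ubar, x j⟫) := by
    set U : Fin n → EuclideanSpace ℝ (Fin d) :=
      fun i => if h : InC i then ((hInC i).1 h).choose else 0 with hU
    have hU2 : ∀ i j, 0 ≤ y j * ⟪U i, x j⟫ := by
      intro i j
      by_cases h : InC i
      · have hspec := ((hInC i).1 h).choose_spec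
        simp only [hU, dif_pos h]
        exact hspec.2.2 j
      · simp [hU, dif_neg h]
    have hU1 : ∀ i, InC i → 0 < y i * ⟪U i, x i⟫ := by
      intro i h
      have hspec := ((hInC i).1 h).choose_spec
      simp only [hU, dif_pos h]
      exact hspec.2.1
    refine ⟨∑ i, U i, ?_, ?_⟩
    · intro j
      rw [sum_inner, Finset.mul_sum]
      exact Finset.sum_nonneg fun i _ => hU2 i j
    · intro j hj
      rw [sum_inner, Finset.mul_sum]
      have := Finset.add_sum_erase Finset.univ (fun i => y j * ⟪U i, x j⟫) (Finset.mem_univ j)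
      rw [← this]
      have h2 : (0:ℝ) ≤ ∑ i ∈ Finset.univ.erase j, y j * ⟪U i, x j⟫ :=
        Finset.sum_nonneg fun i _ => hU2 i j
      exact add_pos_of_pos_of_nonneg (hU1 j hj) h2
  obtain ⟨ubar, hub1, hub2⟩ := hub
  -- key lemma L
  have keyL : ∀ u, u ∈ S → ‖u‖ = 1 → ∃ i, ¬ InC i ∧ y i * ⟪u, x i⟫ < 0 := by
    intro u huS hu1
    by_contra hcon
    push_neg at hcon
    -- hcon : ∀ i, ¬ InC i → 0 ≤ y i * ⟪u, x i⟫
    by_cases hstrict : ∃ i0, ¬ InC i0 ∧ 0 < y i0 * ⟪u, x i0⟫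
    · obtain ⟨i0, hi0, hpos0⟩ := hstrict
      -- choose t large enough
      have hev : ∀ᶠ t : ℝ in atTop,
          (0 < t ∧ ∀ j, InC j → 0 < t⁻¹ * (y j * ⟪u, x j⟫) + y j * ⟪ubar, x j⟫) := by
        refine (eventually_gt_atTop 0).and ?_
        rw [eventually_all]
        intro j
        by_cases hj : InC j
        · have htend : Tendsto (fun t : ℝ => t⁻¹ * (y j * ⟪u, x j⟫) + y j * ⟪ubar, x j⟫)
              atTop (nhds (0 * (y j * ⟪u, x j⟫) + y j * ⟪ubar, x j⟫)) :=
            ((tendsto_inv_atTop_zero).mul_const _).add_const _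
          rw [zero_mul, zero_add] at htend
          have := htend (Ioi_mem_nhds (hub2 j hj))
          filter_upwards [this] with t ht _
          exact ht
        · filter_upwards with t ht
          exact absurd ht hj
      obtain ⟨t, ht0, htj⟩ := hev.exists
      set u' : EuclideanSpace ℝ (Fin d) := t⁻¹ • u + ubar with hu'
      have hmargin : ∀ j, y j * ⟪u', x j⟫ = t⁻¹ * (y j * ⟪u, x j⟫) + y j * ⟪ubar, x j⟫ := by
        intro j
        rw [hu', inner_add_left, inner_smul_left]
        simp only [conj_trivial]
        ring
      have hm0 : 0 < y i0 * ⟪u', x i0⟫ := by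
        rw [hmargin]
        have : 0 < t⁻¹ * (y i0 * ⟪u, x i0⟫) := mul_pos (inv_pos.mpr ht0) hpos0
        linarith [hub1 i0]
      have hall : ∀ j, 0 ≤ y j * ⟪u', x j⟫ := by
        intro j
        rw [hmargin]
        by_cases hj : InC j
        · exact (htj j hj).le
        · have h1 : 0 ≤ t⁻¹ * (y j * ⟪u, x j⟫) :=
            mul_nonneg (inv_pos.mpr ht0).le (hcon j hj)
          linarith [hub1 j]
      have hu'ne : u' ≠ 0 := by
        intro h
        rw [h] at hm0
        simp at hm0
      have hInCi0 : InC i0 := by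
        rw [hInC]
        refine ⟨‖u'‖⁻¹ • u', norm_smul_inv_norm hu'ne, ?_, ?_⟩
        · rw [inner_smul_left]
          simp only [conj_trivial]
          have : 0 < ‖u'‖⁻¹ := inv_pos.mpr (norm_pos_iff.mpr hu'ne)
          calc (0:ℝ) < ‖u'‖⁻¹ * (y i0 * ⟪u', x i0⟫) := mul_pos this hm0
          _ = y i0 * (‖u'‖⁻¹ * ⟪u', x i0⟫) := by ring
        · intro j
          rw [inner_smul_left]
          simp only [conj_trivial]
          have h0 : 0 ≤ ‖u'‖⁻¹ := inv_nonneg.mpr (norm_nonneg _)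
          calc (0:ℝ) ≤ ‖u'‖⁻¹ * (y j * ⟪u', x j⟫) := mul_nonneg h0 (hall j)
          _ = y j * (‖u'‖⁻¹ * ⟪u', x j⟫) := by ring
      exact hi0 hInCi0
    · push_neg at hstrict
      have hzero : ∀ i, ¬ InC i → ⟪u, x i⟫ = 0 := by
        intro i hi
        have h1 := hcon i hi
        have h2 := hstrict i hi
        have : y i * ⟪u, x i⟫ = 0 := le_antisymm h2 h1
        rcases mul_eq_zero.mp this with h | h
        · exact absurd h (hyne i)
        · exact h
      have := horth u huS hzero
      rw [this] at hu1
      simp at hu1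
  -- continuity of Rs
  have hRscont : Continuous Rs := by
    rw [hRs]
    exact continuous_const.mul (continuous_finset_sum _ (fun i _ =>
      hd1.continuous.comp (continuous_const.mul ((continuous_id.inner continuous_const)))))
  -- strict minimality
  have hmin : ∀ v ∈ S, v ≠ vbar → Rs vbar < Rs v := by
    intro v hvS' hvne
    -- there is a coordinate where the margins differ
    have hdiff : ∃ i, ¬ InC i ∧ ⟪v, x i⟫ ≠ ⟪vbar, x i⟫ := by
      by_contra hcon
      push_neg at hcon
      have : v - vbar = 0 := by
        apply horth _ (Submodule.sub_mem S hvS' hvS)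
        intro i hi
        rw [inner_sub_left, hcon i hi]
        ring
      exact hvne (by rwa [sub_eq_zero] at this)
    obtain ⟨istar, histar, hneq⟩ := hdiff
    set mid : EuclideanSpace ℝ (Fin d) := (2:ℝ)⁻¹ • (v + vbar) with hmid
    have hmidS : mid ∈ S := Submodule.smul_mem S _ (Submodule.add_mem S hvS' hvS)
    have hmargmid : ∀ i : Fin n,
        y i * ⟪mid, x i⟫ = ((y i * ⟪v, x i⟫) + (y i * ⟪vbar, x i⟫)) / 2 := by
      intro i
      rw [hmid, inner_smul_left, inner_add_left]
      simp only [conj_trivial]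
      ring
    have hterm_le : ∀ i ∈ Ds, ℓ (y i * ⟪mid, x i⟫)
        ≤ (ℓ (y i * ⟪v, x i⟫) + ℓ (y i * ⟪vbar, x i⟫)) / 2 := by
      intro i _
      rw [hmargmid]
      exact midpoint_le hd1 hm _ _
    have hterm_lt : ℓ (y istar * ⟪mid, x istar⟫)
        < (ℓ (y istar * ⟪v, x istar⟫) + ℓ (y istar * ⟪vbar, x istar⟫)) / 2 := by
      rw [hmargmid]
      apply midpoint_lt hd1 hm
      intro h
      exact hneq (by
        have := mul_left_cancel₀ (hyne istar) h
        exact this)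
    have histar_mem : istar ∈ Ds := by
      rw [hDs, Finset.mem_filter]
      exact ⟨Finset.mem_univ _, histar⟩
    have hsumlt : ∑ i ∈ Ds, ℓ (y i * ⟪mid, x i⟫)
        < ∑ i ∈ Ds, (ℓ (y i * ⟪v, x i⟫) + ℓ (y i * ⟪vbar, x i⟫)) / 2 :=
      Finset.sum_lt_sum hterm_le ⟨istar, histar_mem, hterm_lt⟩
    have hRsmid : Rs mid < (Rs v + Rs vbar) / 2 := by
      rw [hRs]
      simp only
      have hexp : ∑ i ∈ Ds, (ℓ (y i * ⟪v, x i⟫) + ℓ (y i * ⟪vbar, x i⟫)) / 2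
          = ((∑ i ∈ Ds, ℓ (y i * ⟪v, x i⟫)) + (∑ i ∈ Ds, ℓ (y i * ⟪vbar, x i⟫))) / 2 := by
        rw [← Finset.sum_add_distrib, Finset.sum_div]
      rw [hexp] at hsumlt
      have h1n : 0 < 1 / (n:ℝ) := by positivity
      calc 1 / (n:ℝ) * ∑ i ∈ Ds, ℓ (y i * ⟪mid, x i⟫)
          < 1 / (n:ℝ) * (((∑ i ∈ Ds, ℓ (y i * ⟪v, x i⟫)) + (∑ i ∈ Ds, ℓ (y i * ⟪vbar, x i⟫))) / 2) :=
            by exact mul_lt_mul_of_pos_left hsumlt h1n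
        _ = (1 / (n:ℝ) * (∑ i ∈ Ds, ℓ (y i * ⟪v, x i⟫))
            + 1 / (n:ℝ) * (∑ i ∈ Ds, ℓ (y i * ⟪vbar, x i⟫))) / 2 := by ring
    have hlow := hvmin mid hmidS
    linarith
  -- coercivity
  have hcoer : ∀ c : ℝ, ∃ r, ∀ v ∈ S, Rs v ≤ c → ‖v‖ ≤ r := by
    by_cases hSbot : S = ⊥
    · intro c
      refine ⟨0, fun v hv _ => ?_⟩
      rw [hSbot, Submodule.mem_bot] at hv
      simp [hv]
    · -- D_s is nonempty
      have hDsne : Ds.Nonempty := by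
        rw [Finset.filter_nonempty_iff]
        by_contra hcon
        push_neg at hcon
        apply hSbot
        rw [hS]
        convert Submodule.span_empty
        rw [Set.eq_empty_iff_forall_notMem]
        rintro v ⟨i, hi, -⟩
        exact hi (hcon i (Finset.mem_univ i))
      -- minimal margin function on the unit sphere of S
      set φ : EuclideanSpace ℝ (Fin d) → ℝ :=
        fun u => Ds.inf' hDsne (fun i => y i * ⟪u, x i⟫) with hφ
      have hφcont : Continuous φ :=
        continuous_finset_inf' hDsne _ (fun i =>
          continuous_const.mul (continuous_id.inner continuous_const))
      set Ksp : Set (EuclideanSpace ℝ (Fin d)) := {u | u ∈ S ∧ ‖u‖ = 1} with hKsp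
      have hKclosed : IsClosed Ksp :=
        IsClosed.inter (Submodule.closed_of_finiteDimensional S)
          (isClosed_eq continuous_norm continuous_const)
      have hKbdd : Bornology.IsBounded Ksp := by
        apply Bornology.IsBounded.subset (Metric.isBounded_closedBall (x := 0) (r := 1))
        intro z hz
        simp [Metric.mem_closedBall, hz.2]
      have hKcomp : IsCompact Ksp := Metric.isCompact_of_isClosed_isBounded hKclosed hKbdd
      have hKne : Ksp.Nonempty := by
        obtain ⟨v, hvS', hvne⟩ := Submodule.exists_mem_ne_zero_of_ne_bot hSbot
        exact ⟨‖v‖⁻¹ • v, Submodule.smul_mem S _ hvS', norm_smul_inv_norm hvne⟩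
      obtain ⟨u0, hu0K, hu0max⟩ := hKcomp.exists_isMaxOn hKne hφcont.continuousOn
      obtain ⟨i1, hi1, hneg⟩ := keyL u0 hu0K.1 hu0K.2
      have hγpos : 0 < -φ u0 := by
        have : φ u0 ≤ y i1 * ⟪u0, x i1⟫ :=
          Finset.inf'_le _ (by rw [hDs, Finset.mem_filter]; exact ⟨Finset.mem_univ _, hi1⟩)
        linarith
      set γ : ℝ := -φ u0 with hγ
      -- margin bound for nonzero v in S
      have hmargin : ∀ v, v ∈ S → v ≠ 0 → ∃ i, ¬ InC i ∧ y i * ⟪v, x i⟫ ≤ -γ * ‖v‖ := by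
        intro v hvS' hvne
        set u : EuclideanSpace ℝ (Fin d) := ‖v‖⁻¹ • v with hu
        have huK : u ∈ Ksp := ⟨Submodule.smul_mem S _ hvS', norm_smul_inv_norm hvne⟩
        have hle : φ u ≤ -γ := by
          have := hu0max huK
          simp only [Set.mem_setOf_eq] at this
          rw [hγ]
          linarith [this]
        obtain ⟨i, hiDs, hieq⟩ := Finset.exists_mem_eq_inf' hDsne (fun i => y i * ⟪u, x i⟫)
        refine ⟨i, (Finset.mem_filter.mp hiDs).2, ?_⟩
        have hval : y i * ⟪u, x i⟫ ≤ -γ := by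
          rw [hφ] at hle
          rw [← hieq]
          exact hle
        have hinner : ⟪v, x i⟫ = ‖v‖ * ⟪u, x i⟫ := by
          rw [hu, inner_smul_left]
          simp only [conj_trivial]
          rw [← mul_assoc, mul_inv_cancel₀ (norm_ne_zero_iff.mpr hvne), one_mul]
        rw [hinner]
        have hn0 : 0 < ‖v‖ := norm_pos_iff.mpr hvne
        calc y i * (‖v‖ * ⟪u, x i⟫) = ‖v‖ * (y i * ⟪u, x i⟫) := by ring
          _ ≤ ‖v‖ * (-γ) := by exact mul_le_mul_of_nonneg_left hval hn0.le
          _ = -γ * ‖v‖ := by ring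
      -- now extract the radius
      intro c
      set A : ℝ := -deriv ℓ 0 with hA
      have hApos : 0 < A := by rw [hA]; linarith [ℓ'neg 0]
      refine ⟨max 0 (((n:ℝ) * c - ℓ 0) / (γ * A)), fun v hvS' hRsv => ?_⟩
      rcases eq_or_ne v 0 with rfl | hvne
      · simp
      · obtain ⟨i, hiInC, hle⟩ := hmargin v hvS' hvne
        have hiDs : i ∈ Ds := by rw [hDs, Finset.mem_filter]; exact ⟨Finset.mem_univ _, hiInC⟩
        -- single term bound
        have hsingle : ℓ (y i * ⟪v, x i⟫) ≤ ∑ j ∈ Ds, ℓ (y j * ⟪v, x j⟫) :=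
          Finset.single_le_sum (f := fun j => ℓ (y j * ⟪v, x j⟫)) (fun j _ => (ℓpos _).le) hiDs
        have hsum_le : ∑ j ∈ Ds, ℓ (y j * ⟪v, x j⟫) ≤ (n:ℝ) * c := by
          rw [hRs] at hRsv
          simp only at hRsv
          have := mul_le_mul_of_nonneg_left hRsv hnR.le
          rw [← mul_assoc] at this
          rw [mul_one_div, div_self (ne_of_gt hnR), one_mul] at this
          linarith [this]
        -- tangent bound at 0
        have htan := tangent_le hd1 hm 0 (y i * ⟪v, x i⟫)
        -- deriv ℓ 0 * margin ≥ γ * A * ‖v‖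
        have hprod : γ * A * ‖v‖ ≤ deriv ℓ 0 * (y i * ⟪v, x i⟫) := by
          have h1 : y i * ⟪v, x i⟫ ≤ -γ * ‖v‖ := hle
          have h2 : deriv ℓ 0 = -A := by rw [hA]; ring
          rw [h2]
          nlinarith [hγpos, norm_nonneg v]
        have hfinal : ℓ 0 + γ * A * ‖v‖ ≤ (n:ℝ) * c := by
          have : ℓ 0 + deriv ℓ 0 * (y i * ⟪v, x i⟫ - 0) ≤ ℓ (y i * ⟪v, x i⟫) := htan
          rw [sub_zero] at this
          linarith
        have : ‖v‖ ≤ ((n:ℝ) * c - ℓ 0) / (γ * A) := by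
          rw [le_div_iff₀ (by positivity)]
          linarith [hfinal]
        exact le_max_of_le_right this
  -- the projection as a continuous linear map
  set P : EuclideanSpace ℝ (Fin d) →L[ℝ] EuclideanSpace ℝ (Fin d) := S.subtypeL.comp (S.orthogonalProjection) with hP
  have hPapp : ∀ v : EuclideanSpace ℝ (Fin d), P v = (S.orthogonalProjection v : EuclideanSpace ℝ (Fin d)) := fun v => rfl
  have hPmem : ∀ v : EuclideanSpace ℝ (Fin d), P v ∈ S := fun v => (S.orthogonalProjection v).2
  have hPinner : ∀ (v : EuclideanSpace ℝ (Fin d)) (i : Fin n), ¬ InC i → ⟪P v, x i⟫ = ⟪v, x i⟫ := by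
    intro v i hi
    have hmem := Submodule.sub_starProjection_mem_orthogonal (K := S) v
    have := (Submodule.mem_orthogonal S _).mp hmem (x i) (hxS i hi)
    rw [real_inner_comm] at this
    rw [inner_sub_left] at this
    have : ⟪v, x i⟫ - ⟪P v, x i⟫ = 0 := by
      rw [hPapp]; exact this
    linarith [this]
  have hRsproj : ∀ v : EuclideanSpace ℝ (Fin d), Rs (P v) = Rs v := by
    intro v
    rw [hRs]
    refine congrArg _ (Finset.sum_congr rfl fun i hi => ?_)
    rw [hPinner v i (by simpa using (Finset.mem_filter.mp hi).2)]
  have hRsleR : ∀ v : EuclideanSpace ℝ (Fin d), Rs v ≤ R v := by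
    intro v
    rw [hRs, hR]
    simp only
    apply mul_le_mul_of_nonneg_left _ (by positivity)
    apply Finset.sum_le_sum_of_subset_of_nonneg (Finset.subset_univ _)
    intro i _ _
    exact (ℓpos _).le
  -- the gradient formula
  have hgradR : ∀ v : EuclideanSpace ℝ (Fin d), gradient R v
      = (1 / (n:ℝ)) • ∑ i, (deriv ℓ (y i * ⟪v, x i⟫) * y i) • x i := by
    intro v
    rw [hR]
    exact HasGradientAt.gradient (hasGradientAt_risk ℓ hd1 _ y x Finset.univ v)
  -- partial gradient
  set Gs : EuclideanSpace ℝ (Fin d) → EuclideanSpace ℝ (Fin d) := fun v => (1 / (n:ℝ)) • ∑ i ∈ Ds, (deriv ℓ (y i * ⟪v, x i⟫) * y i) • x i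
    with hGs
  -- convexity tangent bound for Rs
  have hRstangent : ∀ v u : EuclideanSpace ℝ (Fin d), Rs v - Rs u ≤ ‖Gs v‖ * ‖v - u‖ := by
    intro v u
    have hinner : ⟪Gs v, v - u⟫
        = (1 / (n:ℝ)) * ∑ i ∈ Ds, (deriv ℓ (y i * ⟪v, x i⟫) * y i) * ⟪x i, v - u⟫ := by
      rw [hGs]
      rw [real_inner_smul_left, sum_inner]
      congr 1
      refine Finset.sum_congr rfl fun i _ => ?_
      rw [real_inner_smul_left]
    have hterm : ∀ i ∈ Ds, ℓ (y i * ⟪v, x i⟫) - ℓ (y i * ⟪u, x i⟫)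
        ≤ (deriv ℓ (y i * ⟪v, x i⟫) * y i) * ⟪x i, v - u⟫ := by
      intro i _
      have htan := tangent_le hd1 hm (y i * ⟪v, x i⟫) (y i * ⟪u, x i⟫)
      have hexp : (deriv ℓ (y i * ⟪v, x i⟫) * y i) * ⟪x i, v - u⟫
          = deriv ℓ (y i * ⟪v, x i⟫) * ((y i * ⟪v, x i⟫) - (y i * ⟪u, x i⟫)) := by
        rw [inner_sub_right]
        rw [real_inner_comm (x i) v, real_inner_comm (x i) u]
        ring
      rw [hexp]
      linarith
    have hsum : Rs v - Rs u ≤ ⟪Gs v, v - u⟫ := by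
      rw [hinner, hRs]
      simp only
      rw [← mul_sub]
      apply mul_le_mul_of_nonneg_left _ (by positivity)
      rw [← Finset.sum_sub_distrib]
      exact Finset.sum_le_sum hterm
    calc Rs v - Rs u ≤ ⟪Gs v, v - u⟫ := hsum
      _ ≤ ‖Gs v‖ * ‖v - u‖ := real_inner_le_norm _ _
  -- ===== gradient descent part =====
  have hRpos : ∀ v, 0 ≤ R v := by
    intro v
    rw [hR]
    exact mul_nonneg (by positivity) (Finset.sum_nonneg fun i _ => (ℓpos _).le)
  have gd : Tendsto (fun t : ℕ => (S.orthogonalProjection (w t) : EuclideanSpace ℝ (Fin d))) atTop (nhds vbar) := by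
    set g : ℕ → EuclideanSpace ℝ (Fin d) := fun t => gradient R (w t) with hg
    have hstep : ∀ t, R (w (t + 1)) ≤ R (w t) := by
      intro t
      have := hdesc t
      nlinarith [sq_nonneg ‖g t‖, hη]
    have hle0 : ∀ t, R (w t) ≤ R (w 0) := by
      intro t
      exact antitone_nat_of_succ_le (f := fun t => R (w t)) hstep (Nat.zero_le t)
    have hsumbd : ∀ T : ℕ, ∑ t ∈ Finset.range T, ‖g t‖ ^ 2 ≤ 2 * R (w 0) / η := by
      intro T
      have h1 : ∀ t, ‖g t‖ ^ 2 ≤ (2 / η) * (R (w t) - R (w (t + 1))) := by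
        intro t
        have := hdesc t
        have h2 : (η / 2) * ‖g t‖ ^ 2 ≤ R (w t) - R (w (t + 1)) := by linarith
        have heq : (2 / η) * ((η / 2) * ‖g t‖ ^ 2) = ‖g t‖ ^ 2 := by
          field_simp
        have h3 := mul_le_mul_of_nonneg_left h2 (by positivity : (0:ℝ) ≤ 2 / η)
        linarith [heq, h3]
      calc ∑ t ∈ Finset.range T, ‖g t‖ ^ 2
          ≤ ∑ t ∈ Finset.range T, (2 / η) * (R (w t) - R (w (t + 1))) :=
            Finset.sum_le_sum fun t _ => h1 t
        _ = (2 / η) * ∑ t ∈ Finset.range T, (R (w t) - R (w (t + 1))) := by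
            rw [Finset.mul_sum]
        _ = (2 / η) * (R (w 0) - R (w T)) := by
            rw [Finset.sum_range_sub' (fun t => R (w t))]
        _ ≤ (2 / η) * R (w 0) := by
            have := hRpos (w T)
            have h3 : (0:ℝ) ≤ 2 / η := by positivity
            nlinarith
        _ = 2 * R (w 0) / η := by ring
    have hsummable : Summable (fun t => ‖g t‖ ^ 2) :=
      summable_of_sum_range_le (fun t => sq_nonneg _) hsumbd
    have hsq0 : Tendsto (fun t => ‖g t‖ ^ 2) atTop (nhds 0) := hsummable.tendsto_atTop_zero
    have hnorm0 : Tendsto (fun t => ‖g t‖) atTop (nhds 0) := by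
      have h1 := (Real.continuous_sqrt.tendsto 0).comp hsq0
      have h2 : (fun t => Real.sqrt (‖g t‖ ^ 2)) = fun t => ‖g t‖ :=
        funext fun t => Real.sqrt_sq (norm_nonneg _)
      rw [Function.comp_def, h2] at h1
      simpa using h1
    have hg0 : Tendsto g atTop (nhds 0) := by
      rw [tendsto_zero_iff_norm_tendsto_zero]
      exact hnorm0
    -- per-point convergence for separable points
    have hci : ∀ i, InC i → Tendsto (fun t => deriv ℓ (y i * ⟪w t, x i⟫)) atTop (nhds 0) := by
      intro i hInCi
      obtain ⟨ui, hui1, huipos, huinn⟩ := (hInC i).1 hInCi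
      set γi : ℝ := y i * ⟪ui, x i⟫ with hγi
      have hkey : ∀ t, -(deriv ℓ (y i * ⟪w t, x i⟫)) * γi ≤ (n:ℝ) * ‖g t‖ := by
        intro t
        have hexp : ⟪ui, g t⟫
            = (1 / (n:ℝ)) * ∑ j, deriv ℓ (y j * ⟪w t, x j⟫) * (y j * ⟪ui, x j⟫) := by
          rw [hg]
          simp only
          rw [hgradR (w t), real_inner_smul_right, inner_sum]
          congr 1
          refine Finset.sum_congr rfl fun j _ => ?_
          rw [real_inner_smul_right]
          ring
        have hterm_nonpos : ∀ j, deriv ℓ (y j * ⟪w t, x j⟫) * (y j * ⟪ui, x j⟫) ≤ 0 :=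
          fun j => mul_nonpos_of_nonpos_of_nonneg (ℓ'neg _).le (huinn j)
        have hsum_le : ∑ j, deriv ℓ (y j * ⟪w t, x j⟫) * (y j * ⟪ui, x j⟫)
            ≤ deriv ℓ (y i * ⟪w t, x i⟫) * γi := by
          rw [← Finset.add_sum_erase Finset.univ _ (Finset.mem_univ i)]
          have : ∑ j ∈ Finset.univ.erase i, deriv ℓ (y j * ⟪w t, x j⟫) * (y j * ⟪ui, x j⟫) ≤ 0 :=
            Finset.sum_nonpos fun j _ => hterm_nonpos j
          rw [hγi]
          linarith
        have hCS : -⟪ui, g t⟫ ≤ ‖g t‖ := by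
          have := abs_real_inner_le_norm ui (g t)
          rw [hui1, one_mul] at this
          have := neg_abs_le ⟪ui, g t⟫
          have h2 := abs_real_inner_le_norm ui (g t)
          rw [hui1, one_mul] at h2
          linarith [abs_le.mp h2]
        have h3 : ⟪ui, g t⟫ ≤ (1 / (n:ℝ)) * (deriv ℓ (y i * ⟪w t, x i⟫) * γi) := by
          rw [hexp]
          exact mul_le_mul_of_nonneg_left hsum_le (by positivity)
        have h4 : -(1 / (n:ℝ)) * (deriv ℓ (y i * ⟪w t, x i⟫) * γi) ≤ ‖g t‖ := by
          linarith
        have h5 := mul_le_mul_of_nonneg_left h4 hnR.le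
        calc -(deriv ℓ (y i * ⟪w t, x i⟫)) * γi
            = (n:ℝ) * (-(1 / (n:ℝ)) * (deriv ℓ (y i * ⟪w t, x i⟫) * γi)) := by
              field_simp
          _ ≤ (n:ℝ) * ‖g t‖ := h5
      have hub' : Tendsto (fun t => (n:ℝ) * ‖g t‖ / γi) atTop (nhds 0) := by
        have := (hnorm0.const_mul (n:ℝ)).div_const γi
        simpa using this
      have hsq : Tendsto (fun t => -(deriv ℓ (y i * ⟪w t, x i⟫))) atTop (nhds 0) := by
        apply tendsto_of_tendsto_of_tendsto_of_le_of_le tendsto_const_nhds hub'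
        · intro t
          show (0:ℝ) ≤ -(deriv ℓ (y i * ⟪w t, x i⟫))
          have := ℓ'neg (y i * ⟪w t, x i⟫)
          linarith
        · intro t
          rw [le_div_iff₀ huipos]
          exact hkey t
      have := hsq.neg
      simpa using this
    -- Gs (w t) → 0
    have hsplit : ∀ t, Gs (w t) = P (g t)
        - (1 / (n:ℝ)) • ∑ i ∈ Dc, (deriv ℓ (y i * ⟪w t, x i⟫) * y i) • P (x i) := by
      intro t
      have hPg : P (g t) = (1 / (n:ℝ)) •
          ∑ i, (deriv ℓ (y i * ⟪w t, x i⟫) * y i) • P (x i) := by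
        rw [hg]
        simp only
        rw [hgradR (w t), map_smul, map_sum]
        congr 1
        refine Finset.sum_congr rfl fun i _ => ?_
        rw [map_smul]
      have hsplit2 : ∑ i, (deriv ℓ (y i * ⟪w t, x i⟫) * y i) • P (x i)
          = (∑ i ∈ Dc, (deriv ℓ (y i * ⟪w t, x i⟫) * y i) • P (x i))
            + ∑ i ∈ Ds, (deriv ℓ (y i * ⟪w t, x i⟫) * y i) • x i := by
        rw [← Finset.sum_filter_add_sum_filter_not Finset.univ (fun i => InC i)
          (fun i => (deriv ℓ (y i * ⟪w t, x i⟫) * y i) • P (x i))]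
        congr 1
        refine Finset.sum_congr rfl fun i hi => ?_
        have hiInC : ¬ InC i := by
          simpa using (Finset.mem_filter.mp hi).2
        congr 1
        rw [hPapp]
        exact Submodule.starProjection_eq_self_iff.mpr (hxS i hiInC)
      rw [hPg, hsplit2, smul_add, hGs]
      abel
    have hsum0 : Tendsto (fun t => ∑ i ∈ Dc, (deriv ℓ (y i * ⟪w t, x i⟫) * y i) • P (x i))
        atTop (nhds 0) := by
      have h1 : Tendsto (fun t => ∑ i ∈ Dc, (deriv ℓ (y i * ⟪w t, x i⟫) * y i) • P (x i))
          atTop (nhds (∑ i ∈ Dc, (0:EuclideanSpace ℝ (Fin d)))) := by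
        apply tendsto_finset_sum
        intro i hi
        have hiInC : InC i := (Finset.mem_filter.mp hi).2
        have := ((hci i hiInC).mul_const (y i)).smul_const (P (x i))
        simpa using this
      simpa using h1
    have hPg0 : Tendsto (fun t => P (g t)) atTop (nhds 0) := by
      have := (P.continuous.tendsto 0).comp hg0
      simpa [map_zero, Function.comp_def] using this
    have hGsto0 : Tendsto (fun t => Gs (w t)) atTop (nhds 0) := by
      have h1 := hPg0.sub (hsum0.const_smul (1 / (n:ℝ)))
      rw [show (0:EuclideanSpace ℝ (Fin d)) - (1 / (n:ℝ)) • (0:EuclideanSpace ℝ (Fin d))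
        = 0 by simp] at h1
      exact Tendsto.congr (fun t => (hsplit t).symm) h1
    -- the projected iterates stay bounded
    obtain ⟨r0, hr0⟩ := hcoer (R (w 0))
    have hRsPw_le : ∀ t, Rs (P (w t)) ≤ R (w 0) := by
      intro t
      rw [hRsproj]
      exact le_trans (hRsleR (w t)) (hle0 t)
    have hbd : ∀ t, ‖P (w t)‖ ≤ r0 := fun t => hr0 _ (hPmem (w t)) (hRsPw_le t)
    have hGsPw : ∀ t, Gs (P (w t)) = Gs (w t) := by
      intro t
      rw [hGs]
      simp only
      congr 1
      refine Finset.sum_congr rfl fun i hi => ?_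
      rw [hPinner (w t) i (by simpa using (Finset.mem_filter.mp hi).2)]
    have hnormGs0 : Tendsto (fun t => ‖Gs (w t)‖ * (r0 + ‖vbar‖)) atTop (nhds 0) := by
      have := (hGsto0.norm).mul_const (r0 + ‖vbar‖)
      simpa using this
    have hupper : ∀ t, Rs (P (w t)) - Rs vbar ≤ ‖Gs (w t)‖ * (r0 + ‖vbar‖) := by
      intro t
      have h1 := hRstangent (P (w t)) vbar
      rw [hGsPw] at h1
      have h2 : ‖P (w t) - vbar‖ ≤ r0 + ‖vbar‖ := by
        calc ‖P (w t) - vbar‖ ≤ ‖P (w t)‖ + ‖vbar‖ := norm_sub_le _ _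
          _ ≤ r0 + ‖vbar‖ := by linarith [hbd t]
      calc Rs (P (w t)) - Rs vbar ≤ ‖Gs (w t)‖ * ‖P (w t) - vbar‖ := h1
        _ ≤ ‖Gs (w t)‖ * (r0 + ‖vbar‖) :=
          mul_le_mul_of_nonneg_left h2 (norm_nonneg _)
    have hdiff0 : Tendsto (fun t => Rs (P (w t)) - Rs vbar) atTop (nhds 0) := by
      apply tendsto_of_tendsto_of_tendsto_of_le_of_le tendsto_const_nhds hnormGs0
      · intro t
        show (0:ℝ) ≤ Rs (P (w t)) - Rs vbar
        have := hvmin (P (w t)) (hPmem (w t))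
        linarith
      · exact hupper
    have hRt : Tendsto (fun t => Rs (P (w t))) atTop (nhds (Rs vbar)) := by
      have := hdiff0.add_const (Rs vbar)
      simpa using this
    exact tendsto_of_risk_tendsto S Rs hRscont vbar hmin hcoer
      (fun t => P (w t)) (fun t => hPmem (w t)) hRt
  -- ===== regularization path part =====
  have reg : Tendsto (fun B : ℝ => (S.orthogonalProjection (wbar B) : EuclideanSpace ℝ (Fin d))) atTop (nhds vbar) := by
    have hRdecomp : ∀ v : EuclideanSpace ℝ (Fin d),
        R v = Rs v + (1 / (n:ℝ)) * ∑ i ∈ Dc, ℓ (y i * ⟪v, x i⟫) := by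
      intro v
      rw [hR, hRs]
      simp only
      rw [← Finset.sum_filter_add_sum_filter_not Finset.univ (fun i => InC i)
        (fun i => ℓ (y i * ⟪v, x i⟫))]
      rw [mul_add]
      ring
    have hRt : Tendsto (fun B => Rs (P (wbar B))) atTop (nhds (Rs vbar)) := by
      rw [Metric.tendsto_atTop]
      intro ε hε
      -- find a good witness point
      have hDcterm : ∀ i, InC i →
          Tendsto (fun t : ℝ => ℓ (y i * ⟪vbar + t • ubar, x i⟫)) atTop (nhds 0) := by
        intro i hInCi
        have hexp : ∀ t : ℝ, y i * ⟪vbar + t • ubar, x i⟫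
            = y i * ⟪vbar, x i⟫ + t * (y i * ⟪ubar, x i⟫) := by
          intro t
          rw [inner_add_left, inner_smul_left]
          simp only [conj_trivial]
          ring
        have hmargin_top : Tendsto (fun t : ℝ => y i * ⟪vbar, x i⟫ + t * (y i * ⟪ubar, x i⟫))
            atTop atTop :=
          tendsto_atTop_add_const_left _ _ (tendsto_id.atTop_mul_const (hub2 i hInCi))
        have := hlim0.comp hmargin_top
        rw [Function.comp_def] at this
        exact Tendsto.congr (fun t => by rw [← hexp]) this
      have hsumDc : Tendsto (fun t : ℝ =>
          (1 / (n:ℝ)) * ∑ i ∈ Dc, ℓ (y i * ⟪vbar + t • ubar, x i⟫)) atTop (nhds 0) := by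
        have h1 : Tendsto (fun t : ℝ => ∑ i ∈ Dc, ℓ (y i * ⟪vbar + t • ubar, x i⟫))
            atTop (nhds (∑ i ∈ Dc, (0:ℝ))) := by
          apply tendsto_finset_sum
          intro i hi
          exact hDcterm i ((Finset.mem_filter.mp hi).2)
        have h2 := h1.const_mul (1 / (n:ℝ))
        simpa using h2
      have hev : ∀ᶠ t : ℝ in atTop,
          ((1 / (n:ℝ)) * ∑ i ∈ Dc, ℓ (y i * ⟪vbar + t • ubar, x i⟫) < ε / 2 ∧ 0 ≤ t) := by
        refine Eventually.and ?_ (eventually_ge_atTop 0)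
        exact hsumDc (Iio_mem_nhds (by positivity))
      obtain ⟨t, hsmall, ht0⟩ := hev.exists
      set p : EuclideanSpace ℝ (Fin d) := vbar + t • ubar with hp
      have hRsp : Rs p ≤ Rs vbar := by
        rw [hRs]
        simp only
        apply mul_le_mul_of_nonneg_left _ (by positivity)
        apply Finset.sum_le_sum
        intro i _
        apply hanti.antitone
        rw [hp, inner_add_left, inner_smul_left]
        simp only [conj_trivial]
        have h1 : 0 ≤ t * (y i * ⟪ubar, x i⟫) := mul_nonneg ht0 (hub1 i)
        nlinarith [h1]
      have hRp : R p ≤ Rs vbar + ε / 2 := by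
        rw [hRdecomp]
        linarith
      refine ⟨max ‖p‖ 0, fun B hB => ?_⟩
      have hB0 : (0:ℝ) ≤ B := le_trans (le_max_right _ _) hB
      obtain ⟨hwnorm, hwopt⟩ := hwbar B hB0
      have hup : R (wbar B) ≤ R p := hwopt p (le_trans (le_max_left _ _) hB)
      have hlow : Rs vbar ≤ Rs (P (wbar B)) := hvmin _ (hPmem _)
      have hhigh : Rs (P (wbar B)) ≤ Rs vbar + ε / 2 := by
        rw [hRsproj]
        calc Rs (wbar B) ≤ R (wbar B) := hRsleR _
          _ ≤ R p := hup
          _ ≤ Rs vbar + ε / 2 := hRp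
      rw [Real.dist_eq, abs_lt]
      constructor <;> linarith
    exact tendsto_of_risk_tendsto S Rs hRscont vbar hmin hcoer
      (fun B => P (wbar B)) (fun B => hPmem (wbar B)) hRt
  exact ⟨gd, reg⟩
end
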